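/- arXiv:2010.14338 — 5 statements merged into one kernel-verified Lean document; each statement's English description precedes it below -/
import Mathlib

section
/- Let (P,D) be a MinGMConn instance in which all input points have pairwise distinct x-coordinates and pairwise distinct y-coordinates, and suppose D is monotone (y(p) < y(q) for every demand (p,q)). Then IR(P,D) ≤ VS(P,D) ≤ opt(P,D). -/
abbrev Pt := ℝ × ℝ
abbrev Dem := Pt × Pt

noncomputable section

/-- ℓ1 distance in the plane. -/
def dist1 (p q : Pt) : ℝ := |p.1 - q.1| + |p.2 - q.2|

/-- Two points are aligned if they are vertically or horizontally aligned. -/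
def Aligned (p q : Pt) : Prop := p.1 = q.1 ∨ p.2 = q.2

/-- `p` and `q` are Manhattan-connected in the point set `S`: the Manhattan graph on `S`
contains a rectilinear path from `p` to `q` of total length `‖p - q‖₁`. -/
def MConnected (S : Set Pt) (p q : Pt) : Prop :=
  ∃ (k : ℕ) (f : Fin (k + 1) → Pt),
    f 0 = p ∧ f (Fin.last k) = q ∧ (∀ i, f i ∈ S) ∧
    (∀ i : Fin k, Aligned (f i.castSucc) (f i.succ)) ∧
    (∑ i : Fin k, dist1 (f i.castSucc) (f i.succ)) = dist1 p q

/-- `Q` is a feasible solution for the instance `(P, D)`. -/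
def MFeasible (P : Set Pt) (D : Set Dem) (Q : Set Pt) : Prop :=
  ∀ d ∈ D, MConnected (P ∪ Q) d.1 d.2

/-- Minimum cardinality of a feasible solution. -/
def optN (P : Set Pt) (D : Set Dem) : ℕ :=
  sInf {n | ∃ Q : Finset Pt, MFeasible P D ↑Q ∧ Q.card = n}

/-- The closed axis-aligned rectangle spanned by `p` and `q`. -/
def Rect (p q : Pt) : Set Pt :=
  {z | min p.1 q.1 ≤ z.1 ∧ z.1 ≤ max p.1 q.1 ∧ min p.2 q.2 ≤ z.2 ∧ z.2 ≤ max p.2 q.2}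

/-- The interior of the axis-aligned rectangle spanned by `p` and `q`. -/
def RectInt (p q : Pt) : Set Pt :=
  {z | min p.1 q.1 < z.1 ∧ z.1 < max p.1 q.1 ∧ min p.2 q.2 < z.2 ∧ z.2 < max p.2 q.2}

/-- The four corners of the rectangle spanned by `p` and `q`. -/
def Corners (p q : Pt) : Set Pt := {(p.1, p.2), (p.1, q.2), (q.1, p.2), (q.1, q.2)}

/-- Two demand rectangles are non-conflicting if neither contains a corner of the other
in its interior. -/
def NonConflicting (d e : Dem) : Prop :=
  (∀ c ∈ Corners e.1 e.2, c ∉ RectInt d.1 d.2) ∧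
  (∀ c ∈ Corners d.1 d.2, c ∉ RectInt e.1 e.2)

/-- `IRN D` : maximum cardinality of an independent (pairwise non-conflicting) subset of `D`. -/
def IRN (D : Set Dem) : ℕ :=
  sSup {n | ∃ D' : Finset Dem, ↑D' ⊆ D ∧ D'.card = n ∧
    ∀ d ∈ D', ∀ e ∈ D', d ≠ e → NonConflicting d e}

/-- The vertical segment at `x = a` spanning the `y`-range between `y1` and `y2`. -/
def VSeg (a y1 y2 : ℝ) : Set Pt :=
  {z | z.1 = a ∧ min y1 y2 ≤ z.2 ∧ z.2 ≤ max y1 y2}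

/-- A finite set of demands is vertically separable: its demand rectangles can be ordered
`R₁, …, R_k` with vertical segments `ℓ₁, …, ℓ_k`, where `ℓᵢ` connects the interior of the top
boundary of `Rᵢ` with the interior of its bottom boundary and avoids `R_j` for all `j > i`. -/
def VertSeparable (D' : Finset Dem) : Prop :=
  ∃ (e : Fin D'.card → Dem) (a : Fin D'.card → ℝ),
    Function.Injective e ∧ (∀ i, e i ∈ D') ∧
    (∀ i, min (e i).1.1 (e i).2.1 < a i ∧ a i < max (e i).1.1 (e i).2.1) ∧
    ∀ i j : Fin D'.card, i < j →
      VSeg (a i) (e i).1.2 (e i).2.2 ∩ Rect (e j).1 (e j).2 = ∅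

/-- `VSN D` : maximum cardinality of a vertically separable subset of `D`. -/
def VSN (D : Set Dem) : ℕ :=
  sSup {n | ∃ D' : Finset Dem, ↑D' ⊆ D ∧ D'.card = n ∧ VertSeparable D'}

/-- `λ(p,q)` : the left vertical side of the demand rectangle `R(p,q)`. -/
def LSeg (d : Dem) : Set Pt := VSeg d.1.1 d.1.2 d.2.2

/-- `ρ(p,q)` : the right vertical side of the demand rectangle `R(p,q)`. -/
def RSeg (d : Dem) : Set Pt := VSeg d.2.1 d.1.2 d.2.2

/-- A left boundary independent set: the left sides are pairwise non-overlapping. -/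
def LeftBIS (D' : Finset Dem) : Prop :=
  ∀ d ∈ D', ∀ e ∈ D', d ≠ e → Set.Subsingleton (LSeg d ∩ LSeg e)

/-- A right boundary independent set: the right sides are pairwise non-overlapping. -/
def RightBIS (D' : Finset Dem) : Prop :=
  ∀ d ∈ D', ∀ e ∈ D', d ≠ e → Set.Subsingleton (RSeg d ∩ RSeg e)

/-- `ISN D` : maximum cardinality of a (left or right) boundary independent subset of `D`. -/
def ISN (D : Set Dem) : ℕ :=
  sSup {n | ∃ D' : Finset Dem, ↑D' ⊆ D ∧ D'.card = n ∧ (LeftBIS D' ∨ RightBIS D')}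

/-- `(P, D)` is a MinGMConn instance: demands are between input points, ordered by
`x`-coordinate. -/
def IsInstance (P : Finset Pt) (D : Finset Dem) : Prop :=
  ∀ d ∈ D, d.1 ∈ P ∧ d.2 ∈ P ∧ d.1.1 < d.2.1

/-- The points of `P` have pairwise distinct `x`-coordinates. -/
def DistinctX (P : Finset Pt) : Prop := ∀ p ∈ P, ∀ q ∈ P, p ≠ q → p.1 ≠ q.1

/-- The points of `P` have pairwise distinct `y`-coordinates. -/
def DistinctY (P : Finset Pt) : Prop := ∀ p ∈ P, ∀ q ∈ P, p ≠ q → p.2 ≠ q.2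

end

noncomputable section

/-- The `i`-th open vertical strip determined by boundaries `b` (with `b 0 = ⊥`, `b s = ⊤`). -/
def strip (s : ℕ) (b : Fin (s + 1) → EReal) (i : Fin s) : Set Pt :=
  {z | b i.castSucc < (z.1 : EReal) ∧ (z.1 : EReal) < b i.succ}

/-- `b` describes a strip subdivision into `s` vertical strips via `s - 1` vertical lines,
none of which passes through a point of `P`. -/
def IsStripSubdivision (s : ℕ) (b : Fin (s + 1) → EReal) (P : Finset Pt) : Prop :=
  1 ≤ s ∧ StrictMono b ∧ b 0 = ⊥ ∧ b (Fin.last s) = ⊤ ∧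
    ∀ p ∈ P, ∀ i : Fin (s + 1), (p.1 : EReal) ≠ b i

/-- The projections `π_𝒮(P)` of the points of `P` onto the adjacent strip boundaries. -/
def stripProj (s : ℕ) (b : Fin (s + 1) → EReal) (P : Set Pt) : Set Pt :=
  {z | ∃ p ∈ P, ∃ i : Fin s, p ∈ strip s b i ∧
    ((i.val ≠ 0 ∧ z = ((b i.castSucc).toReal, p.2)) ∨
     (i.val + 1 ≠ s ∧ z = ((b i.succ).toReal, p.2)))}

/-- The demand set `π_𝒮(D)` of the inter-strip instance: demands between points in
different, non-adjacent strips, projected to the adjacent strip boundaries. -/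
def stripDem (s : ℕ) (b : Fin (s + 1) → EReal) (D : Set Dem) : Set Dem :=
  {d | ∃ pq ∈ D, ∃ i j : Fin s,
    pq.1 ∈ strip s b i ∧ pq.2 ∈ strip s b j ∧ i.val + 2 ≤ j.val ∧
    d = (((b i.succ).toReal, pq.1.2), ((b j.castSucc).toReal, pq.2.2))}

/-- `p 0, …, p n` form a triangular instance of size `n` :
`x`-coordinates strictly increasing, while `p 1, …, p n` form a descending diagonal
lying to the top-right of `p 0`. -/
def IsTriangular (n : ℕ) (p : Fin (n + 1) → Pt) : Prop :=
  (∀ i j : Fin (n + 1), i < j → (p i).1 < (p j).1) ∧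
  (∀ i j : Fin (n + 1), i ≠ 0 → i < j → (p j).2 < (p i).2) ∧
  (∀ i : Fin (n + 1), i ≠ 0 → (p 0).2 < (p i).2)

/-- The point set of a triangular instance. -/
def triP (n : ℕ) (p : Fin (n + 1) → Pt) : Finset Pt := Finset.image p Finset.univ

/-- The demand set of a triangular instance: `(p 0, p i)` for `1 ≤ i ≤ n`. -/
def triD (n : ℕ) (p : Fin (n + 1) → Pt) : Finset Dem :=
  Finset.image (fun i => (p 0, p i)) (Finset.univ.filter fun i : Fin (n + 1) => i ≠ 0)

/-- The triangular grid of a triangular instance. -/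
def triGrid (n : ℕ) (p : Fin (n + 1) → Pt) : Set Pt :=
  {z | (∃ i, z.1 = (p i).1) ∧ (∃ j, z.2 = (p j).2) ∧
    ∃ i : Fin (n + 1), i ≠ 0 ∧ z ∈ Rect (p 0) (p i)}

/-- `Q` is arboreally satisfied: for every non-aligned pair of its points, the rectangle
they span contains a third point of `Q`. -/
def ArboreallySatisfied (Q : Finset Pt) : Prop :=
  ∀ p ∈ Q, ∀ q ∈ Q, ¬ Aligned p q → ∃ r ∈ Q, r ≠ p ∧ r ≠ q ∧ r ∈ Rect p q

/-- The Manhattan graph on a finite point set `S`. -/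
def manhattanGraph (S : Finset Pt) : SimpleGraph {x : Pt // x ∈ S} where
  Adj a b := a ≠ b ∧ Aligned a.1 b.1
  symm := ⟨fun _ _ h => ⟨h.1.symm, h.2.imp Eq.symm Eq.symm⟩⟩
  loopless := ⟨fun _ h => h.1 rfl⟩

/-- The demand graph of an instance `(P, D)`. -/
def demandGraph (P : Finset Pt) (D : Finset Dem) : SimpleGraph {x : Pt // x ∈ P} where
  Adj a b := a ≠ b ∧ (((a : Pt), (b : Pt)) ∈ D ∨ ((b : Pt), (a : Pt)) ∈ D)
  symm := ⟨fun _ _ h => ⟨h.1.symm, h.2.symm⟩⟩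
  loopless := ⟨fun _ h => h.1 rfl⟩

/-- `C` is an axis-aligned rectangle: a product of two intervals. -/
def IsAxisRect (C : Set Pt) : Prop :=
  ∃ I J : Set ℝ, I.OrdConnected ∧ J.OrdConnected ∧ C = I ×ˢ J

end
section Helpers
open Finset

/-- discrete crossing lemma -/
lemma nat_cross (g : ℕ → ℝ) (a : ℝ) (hne : ∀ n, g n ≠ a) :
    ∀ k, g 0 < a → a < g k → ∃ j, j < k ∧ g j < a ∧ a < g (j + 1) := by
  intro k
  induction k with
  | zero => intro h1 h2; exact absurd (h1.trans h2) (lt_irrefl _)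
  | succ k ih =>
    intro h1 h2
    by_cases hk : g k < a
    · exact ⟨k, Nat.lt_succ_self k, hk, h2⟩
    · have : a < g k := lt_of_le_of_ne (not_lt.1 hk) (Ne.symm (hne k))
      obtain ⟨j, hj, h3, h4⟩ := ih h1 this
      exact ⟨j, hj.trans (Nat.lt_succ_self k), h3, h4⟩

lemma steps_nonneg {k : ℕ} (v : Fin k → ℝ) (h : ∑ i, |v i| = ∑ i, v i) :
    ∀ i, 0 ≤ v i := by
  have h0 : ∑ i, (|v i| - v i) = 0 := by
    rw [Finset.sum_sub_distrib, h, sub_self]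
  have h1 : ∀ i ∈ Finset.univ, 0 ≤ |v i| - v i := fun i _ => sub_nonneg.2 (le_abs_self _)
  intro i
  have := (Finset.sum_eq_zero_iff_of_nonneg h1).1 h0 i (Finset.mem_univ i)
  have h2 : |v i| = v i := by linarith
  rw [← h2]; exact abs_nonneg _

end Helpers
section PathLemma

/-- Main path-crossing lemma. -/
lemma path_cross (S : Set Pt) (p q : Pt) (hc : MConnected S p q)
    (hx : p.1 < q.1) (hy : p.2 < q.2) (a : ℝ)
    (ha1 : p.1 < a) (ha2 : a < q.1) (haS : ∀ z ∈ S, z.1 ≠ a) :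
    ∃ u w : Pt, u ∈ S ∧ w ∈ S ∧ u.2 = w.2 ∧ p.2 ≤ u.2 ∧ u.2 ≤ q.2 ∧
      p.1 ≤ u.1 ∧ w.1 ≤ q.1 ∧ u.1 < a ∧ a < w.1 := by
  obtain ⟨k, f, h0, hlast, hmem, halign, hsum⟩ := hc
  set F : ℕ → ℝ := fun n => (f ⟨min n k, by omega⟩).1 with hF
  set G : ℕ → ℝ := fun n => (f ⟨min n k, by omega⟩).2 with hG
  have hfin : ∀ i : Fin (k+1), f i = (F i.val, G i.val) := by
    intro i
    have hm : (⟨min i.val k, by omega⟩ : Fin (k+1)) = i := by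
      ext; simp [Nat.min_eq_left (Nat.lt_succ_iff.1 i.isLt)]
    simp only [hF, hG, hm]
  -- step values
  set u : Fin k → ℝ := fun i => F (i.val + 1) - F i.val with hu
  set v : Fin k → ℝ := fun i => G (i.val + 1) - G i.val with hv
  have hcast : ∀ i : Fin k, (i.castSucc : Fin (k+1)).val = i.val := fun i => rfl
  have hsucc : ∀ i : Fin k, (i.succ : Fin (k+1)).val = i.val + 1 := fun i => rfl
  have hterm : ∀ i : Fin k, dist1 (f i.castSucc) (f i.succ) = |u i| + |v i| := by
    intro i
    rw [hfin i.castSucc, hfin i.succ]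
    simp only [dist1, hcast, hsucc, hu, hv]
    rw [abs_sub_comm (F i.val), abs_sub_comm (G i.val)]
  have hFtel : ∑ i : Fin k, u i = F k - F 0 := by
    rw [show (fun i : Fin k => u i) = (fun i : Fin k => ((fun n => F (n+1) - F n) : ℕ → ℝ) i.val) from rfl]
    rw [Fin.sum_univ_eq_sum_range (fun n => F (n+1) - F n) k]
    exact Finset.sum_range_sub F k
  have hGtel : ∑ i : Fin k, v i = G k - G 0 := by
    rw [show (fun i : Fin k => v i) = (fun i : Fin k => ((fun n => G (n+1) - G n) : ℕ → ℝ) i.val) from rfl]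
    rw [Fin.sum_univ_eq_sum_range (fun n => G (n+1) - G n) k]
    exact Finset.sum_range_sub G k
  have hF0 : F 0 = p.1 := by rw [← h0, hfin 0]; simp
  have hG0 : G 0 = p.2 := by rw [← h0, hfin 0]; simp
  have hFk : F k = q.1 := by
    rw [← hlast, hfin (Fin.last k)]; simp [Fin.last]
  have hGk : G k = q.2 := by
    rw [← hlast, hfin (Fin.last k)]; simp [Fin.last]
  have hsum' : ∑ i : Fin k, (|u i| + |v i|) = (q.1 - p.1) + (q.2 - p.2) := by
    rw [← Finset.sum_congr rfl (fun i _ => hterm i)] at *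
    rw [hsum, dist1, abs_of_neg (by linarith), abs_of_neg (by linarith)]; ring
  have hule : ∑ i : Fin k, u i ≤ ∑ i : Fin k, |u i| :=
    Finset.sum_le_sum (fun i _ => le_abs_self _)
  have hvle : ∑ i : Fin k, v i ≤ ∑ i : Fin k, |v i| :=
    Finset.sum_le_sum (fun i _ => le_abs_self _)
  have hsplit : ∑ i : Fin k, |u i| + ∑ i : Fin k, |v i| = (q.1 - p.1) + (q.2 - p.2) := by
    rw [← Finset.sum_add_distrib]; exact hsum'
  have hueq : ∑ i : Fin k, |u i| = ∑ i : Fin k, u i := by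
    rw [hFtel, hF0, hFk] at *
    rw [hGtel, hG0, hGk] at hvle
    linarith
  have hveq : ∑ i : Fin k, |v i| = ∑ i : Fin k, v i := by
    rw [hFtel, hF0, hFk] at hule
    rw [hGtel, hG0, hGk] at *
    linarith
  have hunn := steps_nonneg u hueq
  have hvnn := steps_nonneg v hveq
  -- monotonicity of F and G on ℕ
  have hFstep : ∀ n, F n ≤ F (n + 1) := by
    intro n
    by_cases hn : n < k
    · have := hunn ⟨n, hn⟩; simp only [hu] at this; linarith
    · have : min (n+1) k = min n k := by omega
      simp only [hF, this]; exact le_refl _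
  have hGstep : ∀ n, G n ≤ G (n + 1) := by
    intro n
    by_cases hn : n < k
    · have := hvnn ⟨n, hn⟩; simp only [hv] at this; linarith
    · have : min (n+1) k = min n k := by omega
      simp only [hG, this]; exact le_refl _
  have hFmono : Monotone F := monotone_nat_of_le_succ hFstep
  have hGmono : Monotone G := monotone_nat_of_le_succ hGstep
  have hFtop : ∀ n, F n ≤ F k := by
    intro n
    rcases le_or_gt n k with h | h
    · exact hFmono h
    · have : min n k = min k k := by omega
      simp only [hF, this]; exact le_refl _
  have hGtop : ∀ n, G n ≤ G k := by
    intro n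
    rcases le_or_gt n k with h | h
    · exact hGmono h
    · have : min n k = min k k := by omega
      simp only [hG, this]; exact le_refl _
  -- crossing
  have hne : ∀ n, F n ≠ a := by
    intro n
    have := hmem ⟨min n k, by omega⟩
    exact haS _ this
  obtain ⟨j, hjk, hj1, hj2⟩ := nat_cross F a hne k (by rw [hF0]; exact ha1) (by rw [hFk]; exact ha2)
  set i : Fin k := ⟨j, hjk⟩ with hi
  have halij := halign i
  rw [hfin i.castSucc, hfin i.succ] at halij
  have hGeq : G j = G (j + 1) := by
    rcases halij with h | h
    · exfalso; simp only [hcast, hsucc, hi] at h; rw [h] at hj1; linarith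
    · simpa [hcast, hsucc, hi] using h
  refine ⟨(F j, G j), (F (j+1), G (j+1)), ?_, ?_, hGeq, ?_, ?_, ?_, ?_, hj1, hj2⟩
  · have := hmem i.castSucc; rwa [hfin i.castSucc] at this
  · have := hmem i.succ; rwa [hfin i.succ] at this
  · rw [← hG0]; exact hGmono (Nat.zero_le _)
  · rw [← hGk]; exact hGtop _
  · rw [← hF0]; exact hFmono (Nat.zero_le _)
  · rw [← hFk]; exact hFtop _

end PathLemma
section Counting
open Finset

lemma countQ (k : ℕ) (Pf Qf : Finset Pt) (hY : DistinctY Pf)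
    (a c ux wx : Fin k → ℝ)
    (h1 : ∀ i, ux i < a i) (h2 : ∀ i, a i < wx i)
    (hu : ∀ i, ((ux i, c i) : Pt) ∈ Pf ∪ Qf) (hw : ∀ i, ((wx i, c i) : Pt) ∈ Pf ∪ Qf)
    (hcr : ∀ i j, i < j → c i = c j → ¬(ux j ≤ a i ∧ a i ≤ wx j)) :
    k ≤ Qf.card := by
  classical
  set Hs : Finset ℝ := Finset.univ.image c with hHs
  have key : ∀ γ ∈ Hs, (Finset.univ.filter fun i => c i = γ).card ≤
      (Qf.filter fun z => z.2 = γ).card := by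
    intro γ _
    set S : Finset (Fin k) := Finset.univ.filter fun i => c i = γ with hS
    rcases S.eq_empty_or_nonempty with hSe | hSne
    · simp [hSe]
    set E : Finset ℝ := S.image ux ∪ S.image wx with hE
    have hEne : E.Nonempty := by
      obtain ⟨i, hi⟩ := hSne
      exact ⟨ux i, Finset.mem_union_left _ (Finset.mem_image_of_mem _ hi)⟩
    set Emin := E.min' hEne with hEmin
    have hfilne : ∀ i ∈ S, (E.filter fun e => a i < e).Nonempty := by
      intro i hi
      exact ⟨wx i, Finset.mem_filter.2
        ⟨Finset.mem_union_right _ (Finset.mem_image_of_mem _ hi), h2 i⟩⟩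
    set ψ : Fin k → ℝ := fun i =>
      if h : (E.filter fun e => a i < e).Nonempty then (E.filter fun e => a i < e).min' h
      else 0 with hψ
    have hψ_spec : ∀ i ∈ S, ψ i ∈ E ∧ a i < ψ i := by
      intro i hi
      have h := hfilne i hi
      simp only [hψ, dif_pos h]
      have := Finset.min'_mem _ h
      exact ⟨(Finset.mem_filter.1 this).1, (Finset.mem_filter.1 this).2⟩
    have hψ_le : ∀ i ∈ S, ∀ e ∈ E, a i < e → ψ i ≤ e := by
      intro i hi e he hae
      have h := hfilne i hi
      simp only [hψ, dif_pos h]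
      exact Finset.min'_le _ _ (Finset.mem_filter.2 ⟨he, hae⟩)
    have hcγ : ∀ i ∈ S, c i = γ := fun i hi => (Finset.mem_filter.1 hi).2
    have huE : ∀ i ∈ S, ux i ∈ E := fun i hi =>
      Finset.mem_union_left _ (Finset.mem_image_of_mem _ hi)
    have hwE : ∀ i ∈ S, wx i ∈ E := fun i hi =>
      Finset.mem_union_right _ (Finset.mem_image_of_mem _ hi)
    -- injectivity helper
    have haux : ∀ i ∈ S, ∀ j ∈ S, i < j → ψ i ≠ ψ j := by
      intro i hi j hj hij
      have hcc : c i = c j := (hcγ i hi).trans (hcγ j hj).symm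
      have hnc := hcr i j hij hcc
      rcases lt_trichotomy (a i) (a j) with h | h | h
      · have huj : a i < ux j := by
          by_contra hle
          exact hnc ⟨not_lt.1 hle, le_of_lt (h.trans (h2 j))⟩
        have h3 : ψ i ≤ ux j := hψ_le i hi _ (huE j hj) huj
        have h4 : a j < ψ j := (hψ_spec j hj).2
        have := h1 j
        intro heq; rw [heq] at h3; linarith
      · exact absurd ⟨le_of_lt (by rw [h]; exact h1 j), le_of_lt (by rw [h]; exact h2 j)⟩ hnc
      · have hwj : wx j < a i := by
          by_contra hle
          exact hnc ⟨le_of_lt ((h1 j).trans h), not_lt.1 hle⟩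
        have h3 : ψ j ≤ wx j := hψ_le j hj _ (hwE j hj) (h2 j)
        have h4 : a i < ψ i := (hψ_spec i hi).2
        intro heq; rw [heq] at h4; linarith
    have hinj : Set.InjOn ψ S := by
      intro i hi j hj heq
      by_contra hne
      rcases lt_or_gt_of_ne hne with h | h
      · exact haux i hi j hj h heq
      · exact haux j hj i hi h heq.symm
    have hmaps : ∀ i ∈ S, ψ i ∈ E.erase Emin := by
      intro i hi
      refine Finset.mem_erase.2 ⟨?_, (hψ_spec i hi).1⟩
      have h1' : Emin ≤ ux i := Finset.min'_le _ _ (huE i hi)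
      have := (hψ_spec i hi).2
      have := h1 i
      intro heq; rw [← heq] at h1'; linarith
    have hcard1 : S.card ≤ (E.erase Emin).card :=
      Finset.card_le_card_of_injOn ψ hmaps hinj
    have hcard2 : (E.erase Emin).card + 1 = E.card :=
      Finset.card_erase_add_one (Finset.min'_mem _ hEne)
    -- E splits into P-part and Q-part
    set EP : Finset ℝ := E.filter (fun x => ((x, γ) : Pt) ∈ Pf) with hEP
    set EQ : Finset ℝ := E.filter (fun x => ((x, γ) : Pt) ∈ Qf) with hEQ
    have hEsub : E ⊆ EP ∪ EQ := by
      intro x hx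
      have : ((x, γ) : Pt) ∈ Pf ∪ Qf := by
        rcases Finset.mem_union.1 hx with h | h
        · obtain ⟨i, hi, rfl⟩ := Finset.mem_image.1 h
          have := hu i; rwa [hcγ i hi] at this
        · obtain ⟨i, hi, rfl⟩ := Finset.mem_image.1 h
          have := hw i; rwa [hcγ i hi] at this
      rcases Finset.mem_union.1 this with h | h
      · exact Finset.mem_union_left _ (Finset.mem_filter.2 ⟨hx, h⟩)
      · exact Finset.mem_union_right _ (Finset.mem_filter.2 ⟨hx, h⟩)
    have hEPcard : EP.card ≤ 1 := by
      refine Finset.card_le_one.2 ?_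
      intro x hx y hy
      have hx' := (Finset.mem_filter.1 hx).2
      have hy' := (Finset.mem_filter.1 hy).2
      by_contra hne
      have : ((x, γ) : Pt) ≠ (y, γ) := fun h => hne (congrArg Prod.fst h)
      exact hY _ hx' _ hy' this rfl
    have hEQcard : EQ.card ≤ (Qf.filter fun z => z.2 = γ).card := by
      refine Finset.card_le_card_of_injOn (fun x => ((x, γ) : Pt)) ?_ ?_
      · intro x hx
        exact Finset.mem_filter.2 ⟨(Finset.mem_filter.1 hx).2, rfl⟩
      · intro x _ y _ h
        exact congrArg Prod.fst h
    have hEcard : E.card ≤ EP.card + EQ.card :=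
      le_trans (Finset.card_le_card hEsub) (Finset.card_union_le _ _)
    omega
  have hk : k = ∑ γ ∈ Hs, (Finset.univ.filter fun i => c i = γ).card := by
    have := Finset.card_eq_sum_card_fiberwise
      (f := c) (s := (Finset.univ : Finset (Fin k))) (t := Hs)
      (fun i _ => Finset.mem_image_of_mem c (Finset.mem_univ i))
    simpa using this
  have hQ : ∑ γ ∈ Hs, (Qf.filter fun z => z.2 = γ).card ≤ Qf.card := by
    set Q' : Finset Pt := Qf.filter (fun z => z.2 ∈ Hs) with hQ'
    have : Q'.card = ∑ γ ∈ Hs, (Q'.filter fun z => z.2 = γ).card :=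
      Finset.card_eq_sum_card_fiberwise (fun z hz => (Finset.mem_filter.1 hz).2)
    have heq : ∀ γ ∈ Hs, (Q'.filter fun z => z.2 = γ) = (Qf.filter fun z => z.2 = γ) := by
      intro γ hγ
      rw [hQ', Finset.filter_filter]
      refine Finset.filter_congr ?_
      intro z _
      constructor
      · rintro ⟨_, h⟩; exact h
      · intro h; exact ⟨h ▸ hγ, h⟩
    calc ∑ γ ∈ Hs, (Qf.filter fun z => z.2 = γ).card
        = ∑ γ ∈ Hs, (Q'.filter fun z => z.2 = γ).card :=
          (Finset.sum_congr rfl (fun γ hγ => by rw [heq γ hγ])).symm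
      _ = Q'.card := this.symm
      _ ≤ Qf.card := Finset.card_le_card (Finset.filter_subset _ _)
  calc k = ∑ γ ∈ Hs, (Finset.univ.filter fun i => c i = γ).card := hk
    _ ≤ ∑ γ ∈ Hs, (Qf.filter fun z => z.2 = γ).card := Finset.sum_le_sum key
    _ ≤ Qf.card := hQ

end Counting
section Perturb
open Finset

lemma vseg_rect_empty (b β1 β2 : ℝ) (d : Dem)
    (h : (b < min d.1.1 d.2.1) ∨ (max d.1.1 d.2.1 < b) ∨
      (max d.1.2 d.2.2 < min β1 β2) ∨ (max β1 β2 < min d.1.2 d.2.2)) :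
    VSeg b β1 β2 ∩ Rect d.1 d.2 = ∅ := by
  ext z
  simp only [Set.mem_inter_iff, Set.mem_empty_iff_false, iff_false]
  rintro ⟨⟨hz1, hz2, hz3⟩, g1, g2, g3, g4⟩
  rcases h with h | h | h | h
  · rw [hz1] at g1; linarith
  · rw [hz1] at g2; linarith
  · linarith
  · linarith

lemma perturb (k : ℕ) (e : Fin k → Dem) (A : ℝ) (i : Fin k)
    (hmm : ∀ j, (e j).1.1 < (e j).2.1 ∧ (e j).1.2 < (e j).2.2)
    (hai : (e i).1.1 < A ∧ A < (e i).2.1)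
    (hsep : ∀ j, i < j → VSeg A (e i).1.2 (e i).2.2 ∩ Rect (e j).1 (e j).2 = ∅)
    (F : Finset ℝ) :
    ∃ b : ℝ, b ∉ F ∧ (e i).1.1 < b ∧ b < (e i).2.1 ∧
      ∀ j, i < j → VSeg b (e i).1.2 (e i).2.2 ∩ Rect (e j).1 (e j).2 = ∅ := by
  classical
  obtain ⟨hli, hbi⟩ := hmm i
  set l := (e i).1.1
  set r := (e i).2.1
  set b1 := (e i).1.2
  set t1 := (e i).2.2
  -- overlapping later demands
  set T : Finset (Fin k) := Finset.univ.filter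
    (fun j => i < j ∧ (e j).1.2 ≤ t1 ∧ b1 ≤ (e j).2.2) with hT
  have hTdodge : ∀ j ∈ T, A < (e j).1.1 ∨ (e j).2.1 < A := by
    intro j hj
    obtain ⟨hij, hyo1, hyo2⟩ := (Finset.mem_filter.1 hj).2
    by_contra hcon
    push_neg at hcon
    obtain ⟨hc1, hc2⟩ := hcon
    have hsepj := hsep j hij
    have hz : (A, max b1 (e j).1.2) ∈ VSeg A b1 t1 ∩ Rect (e j).1 (e j).2 := by
      obtain ⟨hlj, hbj⟩ := hmm j
      constructor
      · refine ⟨rfl, ?_, ?_⟩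
        · rw [min_eq_left (le_of_lt hbi)]; exact le_max_left _ _
        · rw [max_eq_right (le_of_lt hbi)]; exact max_le (le_of_lt hbi) hyo1
      · refine ⟨?_, ?_, ?_, ?_⟩
        · rw [min_eq_left (le_of_lt hlj)]; exact hc1
        · rw [max_eq_right (le_of_lt hlj)]; exact hc2
        · rw [min_eq_left (le_of_lt hbj)]; exact le_max_right _ _
        · rw [max_eq_right (le_of_lt hbj)]; exact max_le hyo2 (le_of_lt hbj)
    rw [hsepj] at hz
    exact hz
  set lows : Finset ℝ := insert l ((T.filter (fun j => (e j).2.1 < A)).image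
    (fun j => (e j).2.1)) with hlows
  set highs : Finset ℝ := insert r ((T.filter (fun j => A < (e j).1.1)).image
    (fun j => (e j).1.1)) with hhighs
  set lo := lows.max' ⟨l, Finset.mem_insert_self _ _⟩ with hlo
  set hi := highs.min' ⟨r, Finset.mem_insert_self _ _⟩ with hhi
  have hloA : lo < A := by
    rw [hlo]; refine (Finset.max'_lt_iff _ _).2 ?_
    intro y hy
    rcases Finset.mem_insert.1 hy with rfl | hy
    · exact hai.1
    · obtain ⟨j, hj, rfl⟩ := Finset.mem_image.1 hy
      exact (Finset.mem_filter.1 hj).2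
  have hAhi : A < hi := by
    rw [hhi]; refine (Finset.lt_min'_iff _ _).2 ?_
    intro y hy
    rcases Finset.mem_insert.1 hy with rfl | hy
    · exact hai.2
    · obtain ⟨j, hj, rfl⟩ := Finset.mem_image.1 hy
      exact (Finset.mem_filter.1 hj).2
  have hIoo : (Set.Ioo lo hi \ ↑F).Nonempty :=
    ((Set.Ioo_infinite (hloA.trans hAhi)).diff F.finite_toSet).nonempty
  obtain ⟨b, hbmem, hbF⟩ := hIoo
  obtain ⟨hblo, hbhi⟩ := hbmem
  have hlb : l < b := lt_of_le_of_lt (Finset.le_max' _ _ (Finset.mem_insert_self _ _)) hblo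
  have hbr : b < r := lt_of_lt_of_le hbhi (Finset.min'_le _ _ (Finset.mem_insert_self _ _))
  refine ⟨b, hbF, hlb, hbr, ?_⟩
  intro j hij
  by_cases hjT : j ∈ T
  · rcases hTdodge j hjT with h | h
    · have : hi ≤ (e j).1.1 := Finset.min'_le _ _
        (Finset.mem_insert_of_mem (Finset.mem_image_of_mem _
          (Finset.mem_filter.2 ⟨hjT, h⟩)))
      refine vseg_rect_empty _ _ _ _ (Or.inl ?_)
      rw [min_eq_left (le_of_lt (hmm j).1)]
      exact lt_of_lt_of_le hbhi this
    · have : (e j).2.1 ≤ lo := by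
        rw [hlo]
        refine Finset.le_max' _ _ ?_
        exact Finset.mem_insert_of_mem (Finset.mem_image_of_mem _
          (Finset.mem_filter.2 ⟨hjT, h⟩))
      refine vseg_rect_empty _ _ _ _ (Or.inr (Or.inl ?_))
      rw [max_eq_right (le_of_lt (hmm j).1)]
      exact lt_of_le_of_lt this hblo
  · have : ¬((e j).1.2 ≤ t1 ∧ b1 ≤ (e j).2.2) := by
      intro hcon
      exact hjT (Finset.mem_filter.2 ⟨Finset.mem_univ _, hij, hcon⟩)
    push_neg at this
    rcases lt_or_ge t1 (e j).1.2 with h | h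
    · refine vseg_rect_empty _ _ _ _ (Or.inr (Or.inr (Or.inr ?_)))
      rw [max_eq_right (le_of_lt hbi), min_eq_left (le_of_lt (hmm j).2)]
      exact h
    · refine vseg_rect_empty _ _ _ _ (Or.inr (Or.inr (Or.inl ?_)))
      rw [min_eq_left (le_of_lt hbi), max_eq_right (le_of_lt (hmm j).2)]
      exact this h

end Perturb
section LemmaA
open Finset

lemma vs_le_card (P : Finset Pt) (D : Finset Dem)
    (hinst : IsInstance P D) (hY : DistinctY P)
    (hmono : ∀ d ∈ D, d.1.2 < d.2.2)
    (D' : Finset Dem) (hsub : ↑D' ⊆ (↑D : Set Dem)) (hvs : VertSeparable D')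
    (Q : Finset Pt) (hQ : MFeasible ↑P ↑D ↑Q) : D'.card ≤ Q.card := by
  classical
  obtain ⟨e, A, heinj, hemem, hmid, hsep⟩ := hvs
  have heD : ∀ j : Fin D'.card, e j ∈ D := fun j => by
    have : e j ∈ (↑D' : Set Dem) := Finset.mem_coe.2 (hemem j)
    exact Finset.mem_coe.1 (hsub this)
  have hmm : ∀ j : Fin D'.card, (e j).1.1 < (e j).2.1 ∧ (e j).1.2 < (e j).2.2 :=
    fun j => ⟨(hinst _ (heD j)).2.2, hmono _ (heD j)⟩
  set F : Finset ℝ := (P ∪ Q).image Prod.fst with hF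
  have hpert : ∀ i : Fin D'.card, ∃ b : ℝ, b ∉ F ∧ (e i).1.1 < b ∧ b < (e i).2.1 ∧
      ∀ j, i < j → VSeg b (e i).1.2 (e i).2.2 ∩ Rect (e j).1 (e j).2 = ∅ := by
    intro i
    have h1 : (e i).1.1 < A i := by
      have := (hmid i).1; rwa [min_eq_left (le_of_lt (hmm i).1)] at this
    have h2 : A i < (e i).2.1 := by
      have := (hmid i).2; rwa [max_eq_right (le_of_lt (hmm i).1)] at this
    exact perturb D'.card e (A i) i hmm ⟨h1, h2⟩ (fun j hj => hsep i j hj) F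
  choose b hbF hbl hbr hbsep using hpert
  -- paths
  have hpath : ∀ i : Fin D'.card, ∃ u w : Pt, u ∈ (↑P ∪ ↑Q : Set Pt) ∧ w ∈ (↑P ∪ ↑Q : Set Pt) ∧
      u.2 = w.2 ∧ (e i).1.2 ≤ u.2 ∧ u.2 ≤ (e i).2.2 ∧
      (e i).1.1 ≤ u.1 ∧ w.1 ≤ (e i).2.1 ∧ u.1 < b i ∧ b i < w.1 := by
    intro i
    refine path_cross _ _ _ (hQ _ (heD i)) (hmm i).1 (hmm i).2 (b i) (hbl i) (hbr i) ?_
    intro z hz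
    intro hcon
    apply hbF i
    rw [hF]
    refine Finset.mem_image.2 ⟨z, ?_, hcon⟩
    rcases hz with h | h
    · exact Finset.mem_union_left _ h
    · exact Finset.mem_union_right _ h
  choose u w hu hw hc2 hby1 hby2 hbx1 hbx2 hua hbw using hpath
  -- apply counting
  refine countQ D'.card P Q hY b (fun i => (u i).2) (fun i => (u i).1) (fun i => (w i).1)
    hua hbw ?_ ?_ ?_
  · intro i
    show ((u i).1, (u i).2) ∈ P ∪ Q
    have : (((u i).1, (u i).2) : Pt) = u i := rfl
    rw [this]
    rcases hu i with h | h
    · exact Finset.mem_union_left _ h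
    · exact Finset.mem_union_right _ h
  · intro i
    show (((w i).1, (u i).2) : Pt) ∈ P ∪ Q
    have : (((w i).1, (u i).2) : Pt) = w i := by
      rw [hc2 i]
    rw [this]
    rcases hw i with h | h
    · exact Finset.mem_union_left _ h
    · exact Finset.mem_union_right _ h
  · intro i j hij hcc
    rintro ⟨hle1, hle2⟩
    change (u i).2 = (u j).2 at hcc
    change (u j).1 ≤ b i at hle1
    change b i ≤ (w j).1 at hle2
    have hz : ((b i, (u j).2) : Pt) ∈ VSeg (b i) (e i).1.2 (e i).2.2 ∩ Rect (e j).1 (e j).2 := by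
      constructor
      · refine ⟨rfl, ?_, ?_⟩
        · show min (e i).1.2 (e i).2.2 ≤ (u j).2
          rw [min_eq_left (le_of_lt (hmm i).2), ← hcc]; exact hby1 i
        · show (u j).2 ≤ max (e i).1.2 (e i).2.2
          rw [max_eq_right (le_of_lt (hmm i).2), ← hcc]; exact hby2 i
      · refine ⟨?_, ?_, ?_, ?_⟩
        · show min (e j).1.1 (e j).2.1 ≤ b i
          rw [min_eq_left (le_of_lt (hmm j).1)]; exact le_trans (hbx1 j) hle1
        · show b i ≤ max (e j).1.1 (e j).2.1
          rw [max_eq_right (le_of_lt (hmm j).1)]; exact le_trans hle2 (hbx2 j)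
        · show min (e j).1.2 (e j).2.2 ≤ (u j).2
          rw [min_eq_left (le_of_lt (hmm j).2)]; exact hby1 j
        · show (u j).2 ≤ max (e j).1.2 (e j).2.2
          rw [max_eq_right (le_of_lt (hmm j).2)]; exact hby2 j
    rw [hbsep i j hij] at hz
    exact hz

end LemmaA
section Bookkeeping
open Finset

lemma trivial_feasible (P : Finset Pt) (D : Finset Dem) (hinst : IsInstance P D) :
    MFeasible ↑P ↑D ↑(D.image fun d => ((d.2.1, d.1.2) : Pt)) := by
  intro d hd
  have hd' : d ∈ D := hd
  obtain ⟨hp, hq, hpq⟩ := hinst d hd'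
  set m : Pt := (d.2.1, d.1.2) with hm
  refine ⟨2, ![d.1, m, d.2], rfl, rfl, ?_, ?_, ?_⟩
  · intro i
    fin_cases i
    · exact Or.inl (Finset.mem_coe.2 hp)
    · exact Or.inr (Finset.mem_coe.2 (Finset.mem_image_of_mem _ hd'))
    · exact Or.inl (Finset.mem_coe.2 hq)
  · intro i
    fin_cases i
    · exact Or.inr rfl
    · exact Or.inl rfl
  · rw [Fin.sum_univ_two]
    show dist1 d.1 m + dist1 m d.2 = dist1 d.1 d.2
    simp only [dist1, hm]
    rw [sub_self, sub_self, abs_zero]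
    ring

lemma optN_mem (P : Finset Pt) (D : Finset Dem) (hinst : IsInstance P D) :
    ∃ Q : Finset Pt, MFeasible ↑P ↑D ↑Q ∧ Q.card = optN ↑P ↑D := by
  have hne : {n | ∃ Q : Finset Pt, MFeasible ↑P ↑D ↑Q ∧ Q.card = n}.Nonempty :=
    ⟨_, D.image (fun d => ((d.2.1, d.1.2) : Pt)), trivial_feasible P D hinst, rfl⟩
  exact Nat.sInf_mem hne

lemma vsempty : VertSeparable (∅ : Finset Dem) := by
  have h0 : (∅ : Finset Dem).card = 0 := Finset.card_empty
  refine ⟨fun i => absurd i.isLt (by simp), fun i => 0, ?_, ?_, ?_, ?_⟩ <;>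
    · intro i
      exact absurd i.isLt (by simp)

end Bookkeeping
section Cover
open Finset

/-- Covering lemma: finitely many closed intervals, pairwise nested or strictly disjoint,
none covering `(α,β)`, leave a free point in `(α,β)`. -/
lemma cover_free : ∀ (n : ℕ) (F : Finset (ℝ × ℝ)), F.card ≤ n →
    (∀ I ∈ F, ∀ J ∈ F, I.2 < J.1 ∨ J.2 < I.1 ∨ (I.1 ≤ J.1 ∧ J.2 ≤ I.2) ∨
      (J.1 ≤ I.1 ∧ I.2 ≤ J.2)) →
    ∀ (α β : ℝ), α < β → (∀ I ∈ F, ¬(I.1 ≤ α ∧ β ≤ I.2)) →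
    ∃ x, α < x ∧ x < β ∧ ∀ I ∈ F, x < I.1 ∨ I.2 < x := by
  intro n
  induction n with
  | zero =>
    intro F hcard hpair α β hαβ hnc
    have : F = ∅ := Finset.card_eq_zero.1 (Nat.le_zero.1 hcard)
    subst this
    exact ⟨(α + β) / 2, by linarith, by linarith, fun I hI => absurd hI (by simp)⟩
  | succ n ih =>
    intro F hcard hpair α β hαβ hnc
    classical
    set S : Finset (ℝ × ℝ) := F.filter (fun I => α < I.2 ∧ I.1 < β) with hS
    rcases S.eq_empty_or_nonempty with hSe | hSne
    · refine ⟨(α + β) / 2, by linarith, by linarith, ?_⟩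
      intro I hI
      have hIS : I ∉ S := by rw [hSe]; simp
      have : ¬(α < I.2 ∧ I.1 < β) := fun hcon => hIS (Finset.mem_filter.2 ⟨hI, hcon⟩)
      push_neg at this
      rcases le_or_gt I.2 α with h | h
      · right; linarith
      · left; have := this h; linarith
    · -- pick M in S with maximal right endpoint
      obtain ⟨M, hMS, hMmax⟩ := S.exists_max_image (fun I => I.2) hSne
      have hMF : M ∈ F := (Finset.mem_filter.1 hMS).1
      have hMmeet : α < M.2 ∧ M.1 < β := (Finset.mem_filter.1 hMS).2
      have hMnc : ¬(M.1 ≤ α ∧ β ≤ M.2) := hnc M hMF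
      rcases lt_or_ge M.2 β with hMr | hMr
      · -- case M.2 < β : recurse on (max α M.2, β)
        set α' := max α M.2 with hα'
        have hα'β : α' < β := max_lt hαβ hMr
        set F' : Finset (ℝ × ℝ) := F.filter (fun I => α' < I.2) with hF'
        have hMnF' : M ∉ F' := by
          intro hcon
          have := (Finset.mem_filter.1 hcon).2
          rw [hα'] at this
          have := lt_of_le_of_lt (le_max_right α M.2) this
          exact lt_irrefl _ this
        have hss : F' ⊂ F := by
          refine Finset.ssubset_iff_of_subset (Finset.filter_subset _ _) |>.2 ⟨M, hMF, hMnF'⟩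
        have hcard' : F'.card ≤ n := by
          have := Finset.card_lt_card hss
          omega
        have hpair' : ∀ I ∈ F', ∀ J ∈ F', I.2 < J.1 ∨ J.2 < I.1 ∨ (I.1 ≤ J.1 ∧ J.2 ≤ I.2) ∨
            (J.1 ≤ I.1 ∧ I.2 ≤ J.2) := fun I hI J hJ =>
          hpair I (Finset.filter_subset _ _ hI) J (Finset.filter_subset _ _ hJ)
        have hnc' : ∀ I ∈ F', ¬(I.1 ≤ α' ∧ β ≤ I.2) := by
          intro I hI ⟨hc1, hc2⟩
          have hIF : I ∈ F := Finset.filter_subset _ _ hI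
          have hIS : I ∈ S := by
            refine Finset.mem_filter.2 ⟨hIF, ?_, ?_⟩
            · calc α < β := hαβ
                _ ≤ I.2 := hc2
            · calc I.1 ≤ α' := hc1
                _ < β := hα'β
          have := hMmax I hIS
          have : I.2 < β := lt_of_le_of_lt this hMr
          linarith
        obtain ⟨x, hx1, hx2, hx3⟩ := ih F' hcard' hpair' α' β hα'β hnc'
        refine ⟨x, lt_of_le_of_lt (le_max_left α M.2) hx1, hx2, ?_⟩
        intro I hI
        by_cases hIF' : I ∈ F'
        · exact hx3 I hIF'
        · have : ¬(α' < I.2) := fun hcon => hIF' (Finset.mem_filter.2 ⟨hI, hcon⟩)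
          right
          calc I.2 ≤ α' := not_lt.1 this
            _ < x := hx1
      · -- case β ≤ M.2, so α < M.1 : recurse on (α, min β M.1)
        have hMl : α < M.1 := by
          by_contra h
          exact hMnc ⟨not_lt.1 h, hMr⟩
        set β' := min β M.1 with hβ'
        have hαβ' : α < β' := lt_min hαβ hMl
        set F' : Finset (ℝ × ℝ) := F.filter (fun I => I.1 < β') with hF'
        have hMnF' : M ∉ F' := by
          intro hcon
          have := (Finset.mem_filter.1 hcon).2
          rw [hβ'] at this
          have := lt_of_lt_of_le this (min_le_right β M.1)
          exact lt_irrefl _ this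
        have hss : F' ⊂ F :=
          Finset.ssubset_iff_of_subset (Finset.filter_subset _ _) |>.2 ⟨M, hMF, hMnF'⟩
        have hcard' : F'.card ≤ n := by
          have := Finset.card_lt_card hss
          omega
        have hpair' : ∀ I ∈ F', ∀ J ∈ F', I.2 < J.1 ∨ J.2 < I.1 ∨ (I.1 ≤ J.1 ∧ J.2 ≤ I.2) ∨
            (J.1 ≤ I.1 ∧ I.2 ≤ J.2) := fun I hI J hJ =>
          hpair I (Finset.filter_subset _ _ hI) J (Finset.filter_subset _ _ hJ)
        have hnc' : ∀ I ∈ F', ¬(I.1 ≤ α ∧ β' ≤ I.2) := by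
          intro I hI ⟨hc1, hc2⟩
          have hIF : I ∈ F := Finset.filter_subset _ _ hI
          have hIS : I ∈ S := by
            refine Finset.mem_filter.2 ⟨hIF, ?_, ?_⟩
            · calc α < β' := hαβ'
                _ ≤ I.2 := hc2
            · calc I.1 ≤ α := hc1
                _ < β := hαβ
          -- use pairwise with M to derive contradiction
          rcases hpair I hIF M hMF with h | h | h | h
          · -- I.2 < M.1 : but I.2 ≥ β' = min β M.1 and I ∈ S means I.2 > α... need β' ≤ I.2 < M.1
            have : β' ≤ I.2 := hc2
            have hββ' : β' = M.1 ∨ β' = β := by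
              rcases min_cases β M.1 with ⟨h1, _⟩ | ⟨h1, _⟩
              · right; rw [hβ']; exact h1
              · left; rw [hβ']; exact h1
            rcases hββ' with he | he
            · rw [he] at this; linarith
            · rw [he] at this
              have := hMmax I hIS
              linarith
          · -- M.2 < I.1 : but I.1 ≤ α < M.2
            have := hMmeet.1
            linarith
          · -- M nested in I: I covers (α, β)
            exact hnc I hIF ⟨hc1, le_trans hMr h.2⟩
          · -- I nested in M: M.1 ≤ I.1 ≤ α < M.1
            have := h.1
            linarith
        obtain ⟨x, hx1, hx2, hx3⟩ := ih F' hcard' hpair' α β' hαβ' hnc'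
        refine ⟨x, hx1, lt_of_lt_of_le hx2 (min_le_left β M.1), ?_⟩
        intro I hI
        by_cases hIF' : I ∈ F'
        · exact hx3 I hIF'
        · have : ¬(I.1 < β') := fun hcon => hIF' (Finset.mem_filter.2 ⟨hI, hcon⟩)
          left
          calc x < β' := hx2
            _ ≤ I.1 := not_lt.1 this

end Cover
section Enum
open Finset

lemma sorted_enum (D' : Finset Dem)
    (hkey : ∀ d ∈ D', ∀ d' ∈ D', d.2.2 = d'.2.2 → d.1.1 = d'.1.1 → d = d') :
    ∃ e : Fin D'.card → Dem, Function.Injective e ∧ (∀ i, e i ∈ D') ∧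
      ∀ i j, i < j →
        ((e i).2.2 < (e j).2.2 ∨ ((e i).2.2 = (e j).2.2 ∧ (e i).1.1 < (e j).1.1)) := by
  classical
  set le : Dem → Dem → Bool :=
    fun d d' => decide (d.2.2 < d'.2.2 ∨ (d.2.2 = d'.2.2 ∧ d.1.1 ≤ d'.1.1)) with hle
  have htrans : ∀ (a b c : Dem), le a b → le b c → le a c := by
    intro a b c hab hbc
    simp only [hle, decide_eq_true_eq] at *
    rcases hab with h | ⟨h1, h2⟩ <;> rcases hbc with h' | ⟨h1', h2'⟩
    · left; linarith
    · left; linarith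
    · left; linarith
    · right; exact ⟨h1.trans h1', h2.trans h2'⟩
  have htotal : ∀ (a b : Dem), le a b || le b a := by
    intro a b
    simp only [hle, Bool.or_eq_true, decide_eq_true_eq]
    rcases lt_trichotomy a.2.2 b.2.2 with h | h | h
    · left; left; exact h
    · rcases le_total a.1.1 b.1.1 with h' | h'
      · left; right; exact ⟨h, h'⟩
      · right; right; exact ⟨h.symm, h'⟩
    · right; left; exact h
  set l : List Dem := D'.toList.mergeSort le with hl
  have hperm : l.Perm D'.toList := List.mergeSort_perm _ _
  have hnd : l.Nodup := hperm.nodup_iff.2 (Finset.nodup_toList D')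
  have hlen : l.length = D'.card := by rw [hperm.length_eq, Finset.length_toList]
  have hsort : l.Pairwise (fun a b => le a b = true) := by
    have := List.pairwise_mergeSort (le := le) htrans (fun a b => htotal a b) D'.toList
    exact this
  have hget := List.pairwise_iff_get.1 hsort
  refine ⟨fun i => l.get (Fin.cast hlen.symm i), ?_, ?_, ?_⟩
  · intro i j hij
    have h2 := List.nodup_iff_injective_get.1 hnd hij
    have h3 : (Fin.cast hlen.symm i).val = (Fin.cast hlen.symm j).val := congrArg Fin.val h2
    exact Fin.ext h3
  · intro i
    have : l.get (Fin.cast hlen.symm i) ∈ l := l.get_mem _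
    exact Finset.mem_toList.1 (hperm.mem_iff.1 this)
  · intro i j hij
    have hij' : (Fin.cast hlen.symm i) < (Fin.cast hlen.symm j) := hij
    have hkey' := hget _ _ hij'
    simp only [hle, decide_eq_true_eq] at hkey'
    rcases hkey' with h | ⟨h1, h2⟩
    · exact Or.inl h
    · rcases lt_or_eq_of_le h2 with h' | h'
      · exact Or.inr ⟨h1, h'⟩
      · exfalso
        have hne : l.get (Fin.cast hlen.symm i) ≠ l.get (Fin.cast hlen.symm j) := by
          intro hcon
          have := List.nodup_iff_injective_get.1 hnd hcon
          rw [this] at hij'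
          exact lt_irrefl _ hij'
        have hmemi : l.get (Fin.cast hlen.symm i) ∈ D' := by
          have : l.get (Fin.cast hlen.symm i) ∈ l := l.get_mem _
          exact Finset.mem_toList.1 (hperm.mem_iff.1 this)
        have hmemj : l.get (Fin.cast hlen.symm j) ∈ D' := by
          have : l.get (Fin.cast hlen.symm j) ∈ l := l.get_mem _
          exact Finset.mem_toList.1 (hperm.mem_iff.1 this)
        exact hne (hkey _ hmemi _ hmemj h1 h')

end Enum
section Straddle

lemma corner_q_mem (d : Dem) : ((d.2.1, d.2.2) : Pt) ∈ Corners d.1 d.2 := by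
  simp [Corners]

lemma corner_lt_mem (d : Dem) : ((d.1.1, d.2.2) : Pt) ∈ Corners d.1 d.2 := by
  simp [Corners]

lemma rectInt_mem (d : Dem) (hm : d.1.1 < d.2.1 ∧ d.1.2 < d.2.2) (z : Pt)
    (h1 : d.1.1 < z.1) (h2 : z.1 < d.2.1) (h3 : d.1.2 < z.2) (h4 : z.2 < d.2.2) :
    z ∈ RectInt d.1 d.2 := by
  refine ⟨?_, ?_, ?_, ?_⟩
  · rw [min_eq_left (le_of_lt hm.1)]; exact h1
  · rw [max_eq_right (le_of_lt hm.1)]; exact h2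
  · rw [min_eq_left (le_of_lt hm.2)]; exact h3
  · rw [max_eq_right (le_of_lt hm.2)]; exact h4

lemma straddle_aux (d1 d2 : Dem) (t : ℝ)
    (hm1 : d1.1.1 < d1.2.1 ∧ d1.1.2 < d1.2.2) (hm2 : d2.1.1 < d2.2.1 ∧ d2.1.2 < d2.2.2)
    (hb1 : d1.1.2 < t) (ht1 : t < d1.2.2) (hb2 : d2.1.2 < t) (ht2 : t < d2.2.2)
    (hnc12 : NonConflicting d1 d2) (hnc21 : NonConflicting d2 d1)
    (hq1p2 : d1.2.1 = d2.1.1 → d1.2 = d2.1)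
    (hq1q2 : d1.2.2 = d2.2.2 → d1.2 = d2.2)
    (hl : d1.1.1 ≤ d2.1.1) :
    d1.2.1 < d2.1.1 ∨ (d1.1.1 ≤ d2.1.1 ∧ d2.2.1 ≤ d1.2.1) ∨
      (d2.1.1 ≤ d1.1.1 ∧ d1.2.1 ≤ d2.2.1) := by
  rcases eq_or_lt_of_le hl with heq | hlt
  · rcases le_total d2.2.1 d1.2.1 with h | h
    · exact Or.inr (Or.inl ⟨hl, h⟩)
    · exact Or.inr (Or.inr ⟨le_of_eq heq.symm, h⟩)
  · by_contra hcon
    push_neg at hcon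
    obtain ⟨h1, h2, _⟩ := hcon
    have hr12 : d2.2.1 > d1.2.1 := h2 hl
    have hl2r1 : d2.1.1 ≤ d1.2.1 := h1
    rcases eq_or_lt_of_le hl2r1 with heq2 | hlt2
    · -- d2.1.1 = d1.2.1 : q1 = p2, so t1 = b2
      have := hq1p2 heq2.symm
      have : d1.2.2 = d2.1.2 := congrArg Prod.snd this
      linarith
    · -- d2.1.1 < d1.2.1 : proper overlap
      rcases lt_trichotomy d1.2.2 d2.2.2 with h | h | h
      · -- corner q1 inside d2
        exact hnc21.1 _ (corner_q_mem d1)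
          (rectInt_mem d2 hm2 _ hlt2 hr12 (by show d2.1.2 < d1.2.2; linarith)
            (by show d1.2.2 < d2.2.2; exact h))
      · -- equal tops: q1 = q2
        have := hq1q2 h
        have : d1.2.1 = d2.2.1 := congrArg Prod.fst this
        linarith
      · -- corner (l2, t2) inside d1
        exact hnc12.1 _ (corner_lt_mem d2)
          (rectInt_mem d1 hm1 _ hlt hlt2 (by show d1.1.2 < d2.2.2; linarith)
            (by show d2.2.2 < d1.2.2; exact h))

end Straddle
section LemmaB
open Finset

lemma indep_vs (P : Finset Pt) (D : Finset Dem)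
    (hinst : IsInstance P D) (hX : DistinctX P) (hY : DistinctY P)
    (hmono : ∀ d ∈ D, d.1.2 < d.2.2)
    (D' : Finset Dem) (hsub : ↑D' ⊆ (↑D : Set Dem))
    (hind : ∀ d ∈ D', ∀ d' ∈ D', d ≠ d' → NonConflicting d d') :
    VertSeparable D' := by
  classical
  have hD : ∀ d ∈ D', d ∈ D := fun d hd => Finset.mem_coe.1 (hsub (Finset.mem_coe.2 hd))
  have hp : ∀ d ∈ D', d.1 ∈ P := fun d hd => (hinst d (hD d hd)).1
  have hq : ∀ d ∈ D', d.2 ∈ P := fun d hd => (hinst d (hD d hd)).2.1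
  have hPx : ∀ z ∈ P, ∀ w ∈ P, z.1 = w.1 → z = w := by
    intro z hz w hw h
    by_contra hne
    exact hX z hz w hw hne h
  have hPy : ∀ z ∈ P, ∀ w ∈ P, z.2 = w.2 → z = w := by
    intro z hz w hw h
    by_contra hne
    exact hY z hz w hw hne h
  have hkey : ∀ d ∈ D', ∀ d' ∈ D', d.2.2 = d'.2.2 → d.1.1 = d'.1.1 → d = d' := by
    intro d hd d' hd' h1 h2
    have hq' : d.2 = d'.2 := hPy _ (hq d hd) _ (hq d' hd') h1
    have hp' : d.1 = d'.1 := hPx _ (hp d hd) _ (hp d' hd') h2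
    exact Prod.ext hp' hq'
  obtain ⟨e, heinj, hemem, hlater⟩ := sorted_enum D' hkey
  have hmmj : ∀ j : Fin D'.card, (e j).1.1 < (e j).2.1 ∧ (e j).1.2 < (e j).2.2 :=
    fun j => ⟨(hinst _ (hD _ (hemem j))).2.2, hmono _ (hD _ (hemem j))⟩
  have hEne : ∀ u v : Fin D'.card, u ≠ v → e u ≠ e v := fun u v huv h => huv (heinj h)
  have hqp : ∀ u v : Fin D'.card, (e u).2.1 = (e v).1.1 → (e u).2 = (e v).1 :=
    fun u v h => hPx _ (hq _ (hemem u)) _ (hp _ (hemem v)) h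
  have hqq : ∀ u v : Fin D'.card, (e u).2.2 = (e v).2.2 → (e u).2 = (e v).2 :=
    fun u v h => hPy _ (hq _ (hemem u)) _ (hq _ (hemem v)) h
  have hfree : ∀ i : Fin D'.card, ∃ x : ℝ, (e i).1.1 < x ∧ x < (e i).2.1 ∧
      ∀ j : Fin D'.card, i < j →
        VSeg x (e i).1.2 (e i).2.2 ∩ Rect (e j).1 (e j).2 = ∅ := by
    intro i
    set sibs : Finset ℝ := insert (e i).2.1
      ((Finset.univ.filter (fun j : Fin D'.card => i < j ∧ (e j).2.2 = (e i).2.2)).image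
        (fun j => (e j).1.1)) with hsibs
    have hsibne : sibs.Nonempty := ⟨(e i).2.1, Finset.mem_insert_self _ _⟩
    set L := sibs.min' hsibne with hLdef
    have hLri : L ≤ (e i).2.1 := Finset.min'_le _ _ (Finset.mem_insert_self _ _)
    have hliL : (e i).1.1 < L := by
      rw [hLdef, Finset.lt_min'_iff]
      intro y hy
      rcases Finset.mem_insert.1 hy with rfl | hy
      · exact (hmmj i).1
      · obtain ⟨j, hj, rfl⟩ := Finset.mem_image.1 hy
        obtain ⟨hij, htj⟩ := (Finset.mem_filter.1 hj).2
        rcases hlater i j hij with h | ⟨h1, h2⟩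
        · exact absurd htj.symm (ne_of_lt h)
        · exact h2
    set Fs : Finset (ℝ × ℝ) := (Finset.univ.filter
        (fun j : Fin D'.card => i < j ∧ (e j).1.2 < (e i).2.2 ∧ (e i).2.2 < (e j).2.2)).image
        (fun j => ((e j).1.1, (e j).2.1)) with hFs
    have hpair : ∀ I ∈ Fs, ∀ J ∈ Fs, I.2 < J.1 ∨ J.2 < I.1 ∨ (I.1 ≤ J.1 ∧ J.2 ≤ I.2) ∨
        (J.1 ≤ I.1 ∧ I.2 ≤ J.2) := by
      intro I hI J hJ
      obtain ⟨j1, hj1, rfl⟩ := Finset.mem_image.1 hI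
      obtain ⟨j2, hj2, rfl⟩ := Finset.mem_image.1 hJ
      obtain ⟨hij1, hbj1, htj1⟩ := (Finset.mem_filter.1 hj1).2
      obtain ⟨hij2, hbj2, htj2⟩ := (Finset.mem_filter.1 hj2).2
      by_cases hjj : j1 = j2
      · subst hjj
        exact Or.inr (Or.inr (Or.inl ⟨le_refl _, le_refl _⟩))
      · have hne12 : e j1 ≠ e j2 := hEne _ _ hjj
        rcases le_total (e j1).1.1 (e j2).1.1 with hll | hll
        · rcases straddle_aux (e j1) (e j2) (e i).2.2 (hmmj j1) (hmmj j2) hbj1 htj1 hbj2 htj2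
            (hind _ (hemem j1) _ (hemem j2) hne12)
            (hind _ (hemem j2) _ (hemem j1) hne12.symm)
            (hqp j1 j2) (hqq j1 j2) hll with h | h | h
          · exact Or.inl h
          · exact Or.inr (Or.inr (Or.inl h))
          · exact Or.inr (Or.inr (Or.inr h))
        · rcases straddle_aux (e j2) (e j1) (e i).2.2 (hmmj j2) (hmmj j1) hbj2 htj2 hbj1 htj1
            (hind _ (hemem j2) _ (hemem j1) hne12.symm)
            (hind _ (hemem j1) _ (hemem j2) hne12)
            (hqp j2 j1) (hqq j2 j1) hll with h | h | h
          · exact Or.inr (Or.inl h)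
          · exact Or.inr (Or.inr (Or.inr h))
          · exact Or.inr (Or.inr (Or.inl h))
    have hnc : ∀ I ∈ Fs, ¬(I.1 ≤ (e i).1.1 ∧ L ≤ I.2) := by
      intro I hI hcon
      obtain ⟨hc1, hc2⟩ := hcon
      obtain ⟨j, hj, rfl⟩ := Finset.mem_image.1 hI
      obtain ⟨hij, hbj, htj⟩ := (Finset.mem_filter.1 hj).2
      have hneji : e j ≠ e i := by
        intro h
        rw [h] at htj
        exact lt_irrefl _ htj
      rcases lt_or_eq_of_le hc1 with hlj | hlj
      · exact (hind _ (hemem j) _ (hemem i) hneji).1 _ (corner_lt_mem (e i))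
          (rectInt_mem (e j) (hmmj j) _ hlj (lt_of_lt_of_le hliL hc2) hbj htj)
      · rcases lt_trichotomy (e j).2.1 (e i).2.1 with hrr | hrr | hrr
        · -- r_j < r_i : the min must be attained by a sibling
          have hLne : L ≠ (e i).2.1 := by
            intro h
            rw [h] at hc2
            exact absurd (lt_of_le_of_lt hc2 hrr) (lt_irrefl _)
          have hLmem : L ∈ sibs := Finset.min'_mem _ _
          rcases Finset.mem_insert.1 hLmem with h | h
          · exact hLne h
          · obtain ⟨s, hs, hLs⟩ := Finset.mem_image.1 h
            obtain ⟨his, hts⟩ := (Finset.mem_filter.1 hs).2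
            have hlsrj : (e s).1.1 ≤ (e j).2.1 := le_trans (le_of_eq hLs) hc2
            rcases lt_or_eq_of_le hlsrj with hlsr | hlsr
            · have hnejs : e j ≠ e s := by
                intro h'
                rw [h'] at htj
                rw [hts] at htj
                exact lt_irrefl _ htj
              refine (hind _ (hemem j) _ (hemem s) hnejs).1 _ (corner_lt_mem (e s))
                (rectInt_mem (e j) (hmmj j) _ ?_ hlsr ?_ ?_)
              · rw [hlj, hLs]
                exact hliL
              · rw [hts]
                exact hbj
              · rw [hts]
                exact htj
            · -- l_s = r_j : q_j = p_s so t_j = b_s < t_s = t_i < t_j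
              have hqe : (e j).2 = (e s).1 := hqp j s hlsr.symm
              have hbs : (e j).2.2 = (e s).1.2 := congrArg Prod.snd hqe
              have h1 := (hmmj s).2
              rw [hts] at h1
              rw [hbs] at htj
              linarith
        · -- r_j = r_i : q_j = q_i so t_j = t_i
          have hqe : (e j).2 = (e i).2 := hPx _ (hq _ (hemem j)) _ (hq _ (hemem i)) hrr
          have : (e j).2.2 = (e i).2.2 := congrArg Prod.snd hqe
          rw [this] at htj
          exact lt_irrefl _ htj
        · -- r_i < r_j : corner q_i inside R_j
          refine (hind _ (hemem j) _ (hemem i) hneji).1 _ (corner_q_mem (e i))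
            (rectInt_mem (e j) (hmmj j) _ ?_ hrr hbj htj)
          rw [hlj]
          exact (hmmj i).1
    obtain ⟨x, hx1, hx2, hx3⟩ := cover_free Fs.card Fs (le_refl _) hpair
      (e i).1.1 L hliL hnc
    refine ⟨x, hx1, lt_of_lt_of_le hx2 hLri, ?_⟩
    intro j hij
    rcases hlater i j hij with hti | ⟨hte, hle⟩
    · rcases lt_trichotomy (e j).1.2 (e i).2.2 with hb | hb | hb
      · -- straddler
        have hmem : ((e j).1.1, (e j).2.1) ∈ Fs := Finset.mem_image_of_mem _
          (Finset.mem_filter.2 ⟨Finset.mem_univ _, hij, hb, hti⟩)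
        rcases hx3 _ hmem with h | h
        · refine vseg_rect_empty _ _ _ _ (Or.inl ?_)
          rw [min_eq_left (le_of_lt (hmmj j).1)]
          exact h
        · refine vseg_rect_empty _ _ _ _ (Or.inr (Or.inl ?_))
          rw [max_eq_right (le_of_lt (hmmj j).1)]
          exact h
      · -- b_j = t_i : p_j = q_i, l_j = r_i
        have hpe : (e j).1 = (e i).2 := hPy _ (hp _ (hemem j)) _ (hq _ (hemem i)) hb
        have hlje : (e j).1.1 = (e i).2.1 := congrArg Prod.fst hpe
        refine vseg_rect_empty _ _ _ _ (Or.inl ?_)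
        rw [min_eq_left (le_of_lt (hmmj j).1), hlje]
        exact lt_of_lt_of_le hx2 hLri
      · -- t_i < b_j : y-disjoint
        refine vseg_rect_empty _ _ _ _ (Or.inr (Or.inr (Or.inr ?_)))
        rw [max_eq_right (le_of_lt (hmmj i).2), min_eq_left (le_of_lt (hmmj j).2)]
        exact hb
    · -- sibling
      have hmem : (e j).1.1 ∈ sibs := Finset.mem_insert_of_mem
        (Finset.mem_image_of_mem _ (Finset.mem_filter.2 ⟨Finset.mem_univ _, hij, hte.symm⟩))
      have hLlj : L ≤ (e j).1.1 := by
        rw [hLdef]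
        exact Finset.min'_le _ _ hmem
      refine vseg_rect_empty _ _ _ _ (Or.inl ?_)
      rw [min_eq_left (le_of_lt (hmmj j).1)]
      exact lt_of_lt_of_le hx2 hLlj
  choose a ha1 ha2 ha3 using hfree
  refine ⟨e, a, heinj, hemem, ?_, ?_⟩
  · intro i
    constructor
    · rw [min_eq_left (le_of_lt (hmmj i).1)]
      exact ha1 i
    · rw [max_eq_right (le_of_lt (hmmj i).1)]
      exact ha2 i
  · exact fun i j hij => ha3 i j hij

end LemmaB
/-- For a MinGMConn instance with pairwise distinct x- and y-coordinates and
monotone demands, `IR(P,D) ≤ VS(P,D) ≤ opt(P,D)`. -/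
theorem stmt0 (P : Finset Pt) (D : Finset Dem)
    (hinst : IsInstance P D) (hX : DistinctX P) (hY : DistinctY P)
    (hmono : ∀ d ∈ D, d.1.2 < d.2.2) :
    IRN ↑D ≤ VSN ↑D ∧ VSN ↑D ≤ optN ↑P ↑D := by
  classical
  set IRset : Set ℕ := {n | ∃ D' : Finset Dem, ↑D' ⊆ (↑D : Set Dem) ∧ D'.card = n ∧
    ∀ d ∈ D', ∀ e ∈ D', d ≠ e → NonConflicting d e} with hIRset
  set VSset : Set ℕ := {n | ∃ D' : Finset Dem, ↑D' ⊆ (↑D : Set Dem) ∧ D'.card = n ∧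
    VertSeparable D'} with hVSset
  have hVSbdd : BddAbove VSset := by
    refine ⟨D.card, ?_⟩
    rintro n ⟨D', hsub, hcard, _⟩
    rw [← hcard]
    exact Finset.card_le_card (Finset.coe_subset.1 hsub)
  have hVSne : VSset.Nonempty := by
    refine ⟨0, ∅, by simp, Finset.card_empty, vsempty⟩
  have hIRne : IRset.Nonempty := by
    refine ⟨0, ∅, by simp, Finset.card_empty, ?_⟩
    intro d hd
    exact absurd hd (Finset.notMem_empty d)
  constructor
  · -- IRN ≤ VSN
    have hsub : IRset ⊆ VSset := by
      rintro n ⟨D', h1, h2, h3⟩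
      exact ⟨D', h1, h2, indep_vs P D hinst hX hY hmono D' h1 h3⟩
    exact csSup_le_csSup hVSbdd hIRne hsub
  · -- VSN ≤ optN
    obtain ⟨Q, hQf, hQc⟩ := optN_mem P D hinst
    refine csSup_le hVSne ?_
    rintro n ⟨D', h1, h2, h3⟩
    rw [← h2, ← hQc]
    exact vs_le_card P D hinst hY hmono D' h1 h3 Q hQf
end

section
/- Let (P,D) be any MinGMConn instance in which all input points have pairwise distinct x-coordinates and pairwise distinct y-coordinates. Then (1/2)·IR(P,D) ≤ VS(P,D) ≤ 2·opt(P,D). -/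
/-! ### Auxiliary lemmas -/

section AuxProofs

open Classical

private theorem telesc (n : ℕ) (g : Fin (n+1) → ℝ) :
    ∑ i : Fin n, (g i.succ - g i.castSucc) = g (Fin.last n) - g 0 := by
  induction n with
  | zero => simp
  | succ m ih =>
    rw [Fin.sum_univ_castSucc]
    have h1 : ∑ i : Fin m, (g i.castSucc.succ - g i.castSucc.castSucc)
        = g (Fin.last m).castSucc - g (Fin.castSucc 0) := ih (fun t => g t.castSucc)
    have h0 : g (Fin.castSucc 0) = g 0 := by norm_num
    rw [h0] at h1
    rw [h1, Fin.succ_last]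
    ring

private lemma path_mono (k : ℕ) (p q : Pt) (f : Fin (k+1) → Pt)
    (hf0 : f 0 = p) (hfl : f (Fin.last k) = q)
    (hsum : (∑ i : Fin k, dist1 (f i.castSucc) (f i.succ)) = dist1 p q)
    (hx : p.1 < q.1) :
    (∀ t : Fin k, (f t.castSucc).1 ≤ (f t.succ).1) ∧ (∀ s, f s ∈ Rect p q) := by
  have hXsum : ∑ i : Fin k, ((f i.succ).1 - (f i.castSucc).1) = q.1 - p.1 := by
    have := telesc k (fun s => (f s).1)
    rwa [hf0, hfl] at this
  have hYsum : ∑ i : Fin k, ((f i.succ).2 - (f i.castSucc).2) = q.2 - p.2 := by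
    have := telesc k (fun s => (f s).2)
    rwa [hf0, hfl] at this
  have hSX : |q.1 - p.1| ≤ ∑ i : Fin k, |(f i.succ).1 - (f i.castSucc).1| := by
    rw [← hXsum]; exact Finset.abs_sum_le_sum_abs _ _
  have hSY : |q.2 - p.2| ≤ ∑ i : Fin k, |(f i.succ).2 - (f i.castSucc).2| := by
    rw [← hYsum]; exact Finset.abs_sum_le_sum_abs _ _
  have hsum' : (∑ i : Fin k, (|(f i.succ).1 - (f i.castSucc).1| + |(f i.succ).2 - (f i.castSucc).2|))
      = |q.1 - p.1| + |q.2 - p.2| := by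
    have e2 : dist1 p q = |q.1 - p.1| + |q.2 - p.2| := by
      simp [dist1, abs_sub_comm]
    rw [← e2, ← hsum]
    exact Finset.sum_congr rfl fun i _ => by simp [dist1, abs_sub_comm]
  rw [Finset.sum_add_distrib] at hsum'
  have hEX : (∑ i : Fin k, |(f i.succ).1 - (f i.castSucc).1|) = q.1 - p.1 := by
    have h1 : |q.1 - p.1| = q.1 - p.1 := abs_of_pos (by linarith)
    nlinarith [hSX, hSY, hsum']
  have hstepx : ∀ t : Fin k, (f t.castSucc).1 ≤ (f t.succ).1 := by
    have hz : (∑ i : Fin k, (|(f i.succ).1 - (f i.castSucc).1| - ((f i.succ).1 - (f i.castSucc).1))) = 0 := by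
      rw [Finset.sum_sub_distrib, hEX, hXsum]; ring
    have hterm := (Finset.sum_eq_zero_iff_of_nonneg
      (fun i _ => by linarith [le_abs_self ((f i.succ).1 - (f i.castSucc).1)])).mp hz
    intro t
    have := hterm t (Finset.mem_univ t)
    have habs := abs_nonneg ((f t.succ).1 - (f t.castSucc).1)
    linarith
  have hmx : Monotone (fun s : Fin (k+1) => (f s).1) := Fin.monotone_iff_le_succ.mpr hstepx
  refine ⟨hstepx, ?_⟩
  have hEY : (∑ i : Fin k, |(f i.succ).2 - (f i.castSucc).2|) = |q.2 - p.2| := by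
    have h1 : |q.1 - p.1| = q.1 - p.1 := abs_of_pos (by linarith)
    nlinarith [hSX, hSY, hsum']
  have hxbd : ∀ s, p.1 ≤ (f s).1 ∧ (f s).1 ≤ q.1 := by
    intro s
    constructor
    · have := hmx (Fin.zero_le s)
      simpa [hf0] using this
    · have := hmx (Fin.le_last s)
      simpa [hfl] using this
  have hybd : ∀ s, min p.2 q.2 ≤ (f s).2 ∧ (f s).2 ≤ max p.2 q.2 := by
    rcases le_or_gt p.2 q.2 with hy | hy
    · have hstepy : ∀ t : Fin k, (f t.castSucc).2 ≤ (f t.succ).2 := by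
        have hz : (∑ i : Fin k, (|(f i.succ).2 - (f i.castSucc).2| - ((f i.succ).2 - (f i.castSucc).2))) = 0 := by
          rw [Finset.sum_sub_distrib, hEY, hYsum, abs_of_nonneg (by linarith : (0:ℝ) ≤ q.2 - p.2)]; ring
        have hterm := (Finset.sum_eq_zero_iff_of_nonneg
          (fun i _ => by linarith [le_abs_self ((f i.succ).2 - (f i.castSucc).2)])).mp hz
        intro t
        have := hterm t (Finset.mem_univ t)
        have habs := abs_nonneg ((f t.succ).2 - (f t.castSucc).2)
        linarith
      have hmy : Monotone (fun s : Fin (k+1) => (f s).2) := Fin.monotone_iff_le_succ.mpr hstepy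
      intro s
      have h1 := hmy (Fin.zero_le s)
      have h2 := hmy (Fin.le_last s)
      simp only [hf0, hfl] at h1 h2
      constructor
      · calc min p.2 q.2 ≤ p.2 := min_le_left _ _
          _ ≤ (f s).2 := h1
      · calc (f s).2 ≤ q.2 := h2
          _ ≤ max p.2 q.2 := le_max_right _ _
    · have hstepy : ∀ t : Fin k, (f t.succ).2 ≤ (f t.castSucc).2 := by
        have hz : (∑ i : Fin k, (|(f i.succ).2 - (f i.castSucc).2| + ((f i.succ).2 - (f i.castSucc).2))) = 0 := by
          rw [Finset.sum_add_distrib, hEY, hYsum, abs_of_nonpos (by linarith : q.2 - p.2 ≤ (0:ℝ))]; ring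
        have hterm := (Finset.sum_eq_zero_iff_of_nonneg
          (fun i _ => by linarith [neg_abs_le ((f i.succ).2 - (f i.castSucc).2)])).mp hz
        intro t
        have := hterm t (Finset.mem_univ t)
        have habs := abs_nonneg ((f t.succ).2 - (f t.castSucc).2)
        linarith
      have hmy : Monotone (fun s : Fin (k+1) => -(f s).2) := Fin.monotone_iff_le_succ.mpr
        (fun t => by simpa using hstepy t)
      intro s
      have h1 := hmy (Fin.zero_le s)
      have h2 := hmy (Fin.le_last s)
      simp only [hf0, hfl] at h1 h2
      constructor
      · calc min p.2 q.2 ≤ q.2 := min_le_right _ _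
          _ ≤ (f s).2 := by linarith
      · calc (f s).2 ≤ p.2 := by linarith
          _ ≤ max p.2 q.2 := le_max_left _ _
  intro s
  refine ⟨?_, ?_, (hybd s).1, (hybd s).2⟩
  · calc min p.1 q.1 ≤ p.1 := min_le_left _ _
      _ ≤ (f s).1 := (hxbd s).1
  · calc (f s).1 ≤ q.1 := (hxbd s).2
      _ ≤ max p.1 q.1 := le_max_right _ _

private lemma path_cross_s1 (k : ℕ) (p q : Pt) (f : Fin (k+1) → Pt)
    (hf0 : f 0 = p) (hfl : f (Fin.last k) = q)
    (halign : ∀ i : Fin k, Aligned (f i.castSucc) (f i.succ))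
    (hsum : (∑ i : Fin k, dist1 (f i.castSucc) (f i.succ)) = dist1 p q)
    (hx : p.1 < q.1) (a : ℝ) (ha1 : p.1 < a) (ha2 : a < q.1)
    (havoid : ∀ s, (f s).1 ≠ a) :
    ∃ u v : Pt, (∃ s, f s = u) ∧ (∃ s, f s = v) ∧ u.2 = v.2 ∧ u.1 < a ∧ a < v.1 ∧
      u ∈ Rect p q ∧ v ∈ Rect p q := by
  obtain ⟨hstep, hrect⟩ := path_mono k p q f hf0 hfl hsum hx
  set T : Finset (Fin (k+1)) := Finset.univ.filter (fun s => (f s).1 < a) with hT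
  have hTne : T.Nonempty := ⟨0, by simp [hT, hf0, ha1]⟩
  set t := T.max' hTne with ht
  have htT : t ∈ T := T.max'_mem hTne
  have htlt : (f t).1 < a := by
    have := htT
    simp only [hT, Finset.mem_filter] at this
    exact this.2
  have htne : t ≠ Fin.last k := by
    intro h
    rw [h, hfl] at htlt
    linarith
  have htval : t.val < k := by
    have := t.isLt
    have h2 : t.val ≠ k := fun h => htne (Fin.ext h)
    omega
  set τ : Fin k := ⟨t.val, htval⟩ with hτ
  have hcs : τ.castSucc = t := Fin.ext rfl
  have hnotT : τ.succ ∉ T := by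
    intro hmem
    have hle := T.le_max' τ.succ hmem
    rw [← ht] at hle
    have : τ.castSucc < τ.succ := Fin.castSucc_lt_succ
    rw [hcs] at this
    exact absurd hle (not_le.mpr this)
  have hvx : a < (f τ.succ).1 := by
    have : ¬ ((f τ.succ).1 < a) := by
      intro h
      exact hnotT (by simp [hT, h])
    rcases lt_or_eq_of_le (not_lt.mp this) with h | h
    · exact h
    · exact absurd h.symm (havoid τ.succ)
  have hux : (f τ.castSucc).1 < a := by rw [hcs]; exact htlt
  have haln := halign τ
  rcases haln with h | h
  · rw [h] at hux; linarith
  · exact ⟨f τ.castSucc, f τ.succ, ⟨_, rfl⟩, ⟨_, rfl⟩, h, hux, hvx, hrect _, hrect _⟩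

end AuxProofs

section PartB

set_option maxHeartbeats 1000000 in
private lemma vsep_le_card (P : Finset Pt) (D : Finset Dem) (hinst : IsInstance P D)
    (hY : DistinctY P) (D' : Finset Dem) (hsub : ∀ d ∈ D', d ∈ D)
    (hvs : VertSeparable D') (Q : Finset Pt) (hQ : MFeasible ↑P ↑D ↑Q) :
    D'.card ≤ Q.card := by
  classical
  obtain ⟨e, a, hinj, hmem, hbnd, hdisj⟩ := hvs
  have hd : ∀ i, e i ∈ D := fun i => hsub _ (hmem i)
  have hpq : ∀ i, (e i).1.1 < (e i).2.1 := fun i => (hinst _ (hd i)).2.2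
  have hminx : ∀ i, min (e i).1.1 (e i).2.1 = (e i).1.1 := fun i => min_eq_left (hpq i).le
  have hmaxx : ∀ i, max (e i).1.1 (e i).2.1 = (e i).2.1 := fun i => max_eq_right (hpq i).le
  -- Step 1: perturb the separating lines off all x-coordinates of P ∪ Q
  have hpert : ∀ i, ∃ bb : ℝ, (e i).1.1 < bb ∧ bb < (e i).2.1 ∧
      (∀ z : Pt, z ∈ (↑P ∪ ↑Q : Set Pt) → z.1 ≠ bb) ∧
      (∀ j, i < j → VSeg bb (e i).1.2 (e i).2.2 ∩ Rect (e j).1 (e j).2 = ∅) := by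
    intro i
    set L : Finset ℝ := insert ((e i).1.1) ((Finset.univ.filter
      (fun j : Fin (D'.card) => i < j ∧ max (e j).1.1 (e j).2.1 < a i)).image
        (fun j => max (e j).1.1 (e j).2.1)) with hLdef
    set R : Finset ℝ := insert ((e i).2.1) ((Finset.univ.filter
      (fun j : Fin (D'.card) => i < j ∧ a i < min (e j).1.1 (e j).2.1)).image
        (fun j => min (e j).1.1 (e j).2.1)) with hRdef
    have hLlt : ∀ x ∈ L, x < a i := by
      intro x hx
      rcases Finset.mem_insert.mp hx with h | h
      · have := hbnd i; rw [hminx i] at this; rw [h]; exact this.1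
      · obtain ⟨j, hj, rfl⟩ := Finset.mem_image.mp h
        exact (Finset.mem_filter.mp hj).2.2
    have hRgt : ∀ x ∈ R, a i < x := by
      intro x hx
      rcases Finset.mem_insert.mp hx with h | h
      · have := hbnd i; rw [hmaxx i] at this; rw [h]; exact this.2
      · obtain ⟨j, hj, rfl⟩ := Finset.mem_image.mp h
        exact (Finset.mem_filter.mp hj).2.2
    have hLne : L.Nonempty := ⟨_, Finset.mem_insert_self _ _⟩
    have hRne : R.Nonempty := ⟨_, Finset.mem_insert_self _ _⟩
    have hlr : L.max' hLne < R.min' hRne :=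
      lt_trans (hLlt _ (L.max'_mem hLne)) (hRgt _ (R.min'_mem hRne))
    obtain ⟨bb, hbmem, hbX⟩ := (Set.Ioo_infinite hlr).exists_notMem_finset
      ((P ∪ Q).image Prod.fst)
    obtain ⟨hb1, hb2⟩ := hbmem
    refine ⟨bb, ?_, ?_, ?_, ?_⟩
    · exact lt_of_le_of_lt (L.le_max' _ (Finset.mem_insert_self _ _)) hb1
    · exact lt_of_lt_of_le hb2 (R.min'_le _ (Finset.mem_insert_self _ _))
    · intro z hz heq
      apply hbX
      rw [← heq]
      apply Finset.mem_image_of_mem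
      rw [← Finset.coe_union] at hz
      exact hz
    · intro j hij
      rw [Set.eq_empty_iff_forall_notMem]
      rintro z ⟨hz1, hz2⟩
      simp only [VSeg, Set.mem_setOf_eq] at hz1
      simp only [Rect, Set.mem_setOf_eq] at hz2
      have hkey : ¬ (min (e j).1.1 (e j).2.1 ≤ a i ∧ a i ≤ max (e j).1.1 (e j).2.1) := by
        intro ⟨h1, h2⟩
        have : ((a i, z.2) : Pt) ∈ VSeg (a i) (e i).1.2 (e i).2.2 ∩ Rect (e j).1 (e j).2 := by
          constructor
          · exact ⟨rfl, hz1.2.1, hz1.2.2⟩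
          · exact ⟨h1, h2, hz2.2.2.1, hz2.2.2.2⟩
        rw [hdisj i j hij] at this
        exact this
      push_neg at hkey
      rcases lt_or_ge (a i) (min (e j).1.1 (e j).2.1) with hc | hc
      · -- e j is strictly to the right of a i
        have hjR : min (e j).1.1 (e j).2.1 ∈ R := by
          apply Finset.mem_insert_of_mem
          exact Finset.mem_image_of_mem _ (Finset.mem_filter.mpr ⟨Finset.mem_univ _, hij, hc⟩)
        have := R.min'_le _ hjR
        have hx2 : z.1 ≥ min (e j).1.1 (e j).2.1 := hz2.1
        rw [hz1.1] at hx2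
        linarith
      · have hc2 : max (e j).1.1 (e j).2.1 < a i := hkey hc
        have hjL : max (e j).1.1 (e j).2.1 ∈ L := by
          apply Finset.mem_insert_of_mem
          exact Finset.mem_image_of_mem _ (Finset.mem_filter.mpr ⟨Finset.mem_univ _, hij, hc2⟩)
        have := L.le_max' _ hjL
        have hx2 : z.1 ≤ max (e j).1.1 (e j).2.1 := hz2.2.1
        rw [hz1.1] at hx2
        linarith
  choose b hb1 hb2 hbP hbdisj using hpert
  -- Step 2: extract a crossing horizontal edge for each demand
  have hpath : ∀ i, ∃ uu vv : Pt, uu ∈ (↑P ∪ ↑Q : Set Pt) ∧ vv ∈ (↑P ∪ ↑Q : Set Pt) ∧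
      uu.2 = vv.2 ∧ uu.1 < b i ∧ b i < vv.1 ∧
      uu ∈ Rect (e i).1 (e i).2 ∧ vv ∈ Rect (e i).1 (e i).2 := by
    intro i
    obtain ⟨kk, f, hf0, hfl, hfS, halign, hsum⟩ := hQ (e i) (Finset.mem_coe.mpr (hd i))
    obtain ⟨uu, vv, ⟨s1, hs1⟩, ⟨s2, hs2⟩, h5⟩ := path_cross_s1 kk (e i).1 (e i).2 f hf0 hfl
      halign hsum (hpq i) (b i) (hb1 i) (hb2 i) (fun s => hbP i (f s) (hfS s))
    exact ⟨uu, vv, hs1 ▸ hfS s1, hs2 ▸ hfS s2, h5⟩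
  choose u v huS hvS huv hub hvb huR hvR using hpath
  set c : Fin D'.card → ℝ := fun i => (v i).2 with hc
  have hcu : ∀ i, (u i).2 = c i := fun i => huv i
  set Z : Fin D'.card → Finset ℝ := fun i =>
    ((Finset.univ.filter (fun j => c j = c i)).image (fun j => (u j).1)) ∪
    ((Finset.univ.filter (fun j => c j = c i)).image (fun j => (v j).1)) with hZ
  have hZeq : ∀ i j, c i = c j → Z i = Z j := by
    intro i j h
    simp only [hZ, h]
  have hZpt : ∀ i, ∀ x ∈ Z i, ((x, c i) : Pt) ∈ (↑P ∪ ↑Q : Set Pt) := by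
    intro i x hx
    rcases Finset.mem_union.mp hx with h | h
    · obtain ⟨j, hj, rfl⟩ := Finset.mem_image.mp h
      have hcj : c j = c i := (Finset.mem_filter.mp hj).2
      have : ((u j).1, c i) = u j := by
        rw [← hcj, ← hcu j]
      rw [this]; exact huS j
    · obtain ⟨j, hj, rfl⟩ := Finset.mem_image.mp h
      have hcj : c j = c i := (Finset.mem_filter.mp hj).2
      have : ((v j).1, c i) = v j := by
        rw [← hcj]
      rw [this]; exact hvS j
  have hZb : ∀ i j, ∀ x ∈ Z j, x ≠ b i := by
    intro i j x hx
    exact hbP i _ (hZpt j x hx)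
  have huZ : ∀ i, (u i).1 ∈ Z i := fun i => Finset.mem_union_left _
    (Finset.mem_image_of_mem _ (Finset.mem_filter.mpr ⟨Finset.mem_univ _, rfl⟩))
  have hvZ : ∀ i, (v i).1 ∈ Z i := fun i => Finset.mem_union_right _
    (Finset.mem_image_of_mem _ (Finset.mem_filter.mpr ⟨Finset.mem_univ _, rfl⟩))
  have hZchar : ∀ i, ∃ (Lv Uv : ℝ),
      (Lv ∈ Z i) ∧ Lv < b i ∧ (Uv ∈ Z i) ∧ b i < Uv ∧
      (∀ x ∈ Z i, x < b i → x ≤ Lv) ∧ (∀ x ∈ Z i, b i < x → Uv ≤ x) := by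
    intro i
    have hLne : ((Z i).filter (fun y => y < b i)).Nonempty :=
      ⟨(u i).1, Finset.mem_filter.mpr ⟨huZ i, hub i⟩⟩
    have hUne : ((Z i).filter (fun y => b i < y)).Nonempty :=
      ⟨(v i).1, Finset.mem_filter.mpr ⟨hvZ i, hvb i⟩⟩
    refine ⟨((Z i).filter (fun y => y < b i)).max' hLne,
            ((Z i).filter (fun y => b i < y)).min' hUne, ?_, ?_, ?_, ?_, ?_, ?_⟩
    · exact (Finset.mem_filter.mp (Finset.max'_mem _ hLne)).1
    · exact (Finset.mem_filter.mp (Finset.max'_mem _ hLne)).2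
    · exact (Finset.mem_filter.mp (Finset.min'_mem _ hUne)).1
    · exact (Finset.mem_filter.mp (Finset.min'_mem _ hUne)).2
    · intro x hx hxb
      exact Finset.le_max' ((Z i).filter (fun y => y < b i)) x (Finset.mem_filter.mpr ⟨hx, hxb⟩)
    · intro x hx hxb
      exact Finset.min'_le ((Z i).filter (fun y => b i < y)) x (Finset.mem_filter.mpr ⟨hx, hxb⟩)
  choose Lf Uf hLZ hLb hUZ hUb hLmax hUmin using hZchar
  set φ : Fin D'.card → Pt := fun i =>
    if ∃ pp ∈ P, pp.2 = c i ∧ pp.1 ≤ Lf i then ((Uf i, c i) : Pt) else ((Lf i, c i) : Pt)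
    with hφ
  have hφsnd : ∀ i, (φ i).2 = c i := by
    intro i
    simp only [hφ]
    split <;> rfl
  have hφQ : ∀ i, φ i ∈ Q := by
    intro i
    simp only [hφ]
    split
    case isTrue h =>
      obtain ⟨pp, hppP, hpp2, hpp1⟩ := h
      rcases (hZpt i _ (hUZ i)) with hP | hQ'
      · exfalso
        have hppne : pp ≠ ((Uf i, c i) : Pt) := by
          intro hcontra
          rw [hcontra] at hpp1
          simp only at hpp1
          have h1 := hUb i
          have h2 := hLb i
          linarith
        have := hY pp hppP _ hP hppne
        simp only at this
        exact this hpp2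
      · exact hQ'
    case isFalse h =>
      rcases (hZpt i _ (hLZ i)) with hP | hQ'
      · exfalso
        exact h ⟨(Lf i, c i), hP, rfl, le_refl _⟩
      · exact hQ'
  -- exclusion property
  have hexcl : ∀ i j, i < j → c i = c j → ¬((u j).1 ≤ b i ∧ b i ≤ (v j).1) := by
    intro i j hij hcij ⟨h1, h2⟩
    have hw : ((b i, c i) : Pt) ∈ VSeg (b i) (e i).1.2 (e i).2.2 ∩ Rect (e j).1 (e j).2 := by
      constructor
      · exact ⟨rfl, (hvR i).2.2.1, (hvR i).2.2.2⟩
      · refine ⟨le_trans (huR j).1 h1, le_trans h2 (hvR j).2.1, ?_, ?_⟩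
        · rw [hcij]; exact (hvR j).2.2.1
        · rw [hcij]; exact (hvR j).2.2.2
    rw [hbdisj i j hij] at hw
    exact hw
  -- gap determination
  have hgapU : ∀ i j, c i = c j → Lf i = Lf j → Uf i ≤ Uf j := by
    intro i j hcij hL
    have hZji : Uf j ∈ Z i := by
      have := hUZ j
      rwa [hZeq j i hcij.symm] at this
    have hgtb : b i < Uf j := by
      by_contra hcon
      push_neg at hcon
      have hne := hZb i j (Uf j) (hUZ j)
      have hlt : Uf j < b i := lt_of_le_of_ne hcon hne
      have hstep : Uf j ≤ Lf i := hLmax i _ hZji hlt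
      rw [hL] at hstep
      have := hLb j
      have := hUb j
      linarith
    exact hUmin i _ hZji hgtb
  have hgapL : ∀ i j, c i = c j → Uf i = Uf j → Lf j ≤ Lf i := by
    intro i j hcij hU
    have hZji : Lf j ∈ Z i := by
      have := hLZ j
      rwa [hZeq j i hcij.symm] at this
    have hltb : Lf j < b i := by
      by_contra hcon
      push_neg at hcon
      have hne := hZb i j (Lf j) (hLZ j)
      have hgt : b i < Lf j := lt_of_le_of_ne hcon (Ne.symm hne)
      have hstep : Uf i ≤ Lf j := hUmin i _ hZji hgt
      rw [hU] at hstep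
      have := hLb j
      have := hUb j
      linarith
    exact hLmax i _ hZji hltb
  have hbothgap : ∀ i j, c i = c j → Lf i = Lf j → Uf i = Uf j :=
    fun i j hcij hL => le_antisymm (hgapU i j hcij hL) (hgapU j i hcij.symm hL.symm)
  have hbothgap' : ∀ i j, c i = c j → Uf i = Uf j → Lf i = Lf j :=
    fun i j hcij hU => le_antisymm (hgapL j i hcij.symm hU.symm) (hgapL i j hcij hU)
  have hφne : ∀ i j, i < j → φ i ≠ φ j := by
    intro i j hij heq
    have hcij : c i = c j := by
      have := congrArg Prod.snd heq
      rwa [hφsnd i, hφsnd j] at this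
    have hfst := congrArg Prod.fst heq
    have hgaps : Lf i = Lf j ∧ Uf i = Uf j := by
      simp only [hφ] at hfst
      by_cases hi : ∃ pp ∈ P, pp.2 = c i ∧ pp.1 ≤ Lf i
      · by_cases hj : ∃ pp ∈ P, pp.2 = c j ∧ pp.1 ≤ Lf j
        · rw [if_pos hi, if_pos hj] at hfst
          simp only at hfst
          exact ⟨hbothgap' i j hcij hfst, hfst⟩
        · rw [if_pos hi, if_neg hj] at hfst
          simp only at hfst
          exfalso
          obtain ⟨pp, hppP, hpp2, hpp1⟩ := hi
          refine hj ⟨pp, hppP, by rw [hpp2, hcij], ?_⟩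
          rw [← hfst]
          have := hLb i
          have := hUb i
          linarith
      · by_cases hj : ∃ pp ∈ P, pp.2 = c j ∧ pp.1 ≤ Lf j
        · rw [if_neg hi, if_pos hj] at hfst
          simp only at hfst
          exfalso
          obtain ⟨pp, hppP, hpp2, hpp1⟩ := hj
          refine hi ⟨pp, hppP, by rw [hpp2, hcij], ?_⟩
          rw [hfst]
          have := hLb j
          have := hUb j
          linarith
        · rw [if_neg hi, if_neg hj] at hfst
          simp only at hfst
          exact ⟨hfst, hbothgap i j hcij hfst⟩
    apply hexcl i j hij hcij
    constructor
    · have h1 : (u j).1 ≤ Lf j := hLmax j _ (huZ j) (hub j)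
      rw [← hgaps.1] at h1
      exact le_trans h1 (hLb i).le
    · have h2 : Uf j ≤ (v j).1 := hUmin j _ (hvZ j) (hvb j)
      rw [← hgaps.2] at h2
      exact le_trans (hUb i).le h2
  have hφinj : Function.Injective φ := by
    intro i j heq
    rcases lt_trichotomy i j with h | h | h
    · exact absurd heq (hφne i j h)
    · exact h
    · exact absurd heq.symm (hφne j i h)
  calc D'.card = (Finset.univ : Finset (Fin D'.card)).card := by simp
    _ ≤ Q.card := Finset.card_le_card_of_injOn φ (fun i _ => hφQ i)
        (Function.Injective.injOn hφinj)

end PartB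

section PartA

private lemma corner_self₁ (p q : Pt) : p ∈ Corners p q := by
  simp [Corners]
private lemma corner_self₂ (p q : Pt) : q ∈ Corners p q := by
  simp [Corners]
private lemma corner_mix₁ (p q : Pt) : ((p.1, q.2) : Pt) ∈ Corners p q := by
  simp [Corners]
private lemma corner_mix₂ (p q : Pt) : ((q.1, p.2) : Pt) ∈ Corners p q := by
  simp [Corners]

private lemma mem_RectInt_asc {p q z : Pt} (h1 : p.1 < q.1) (h2 : p.2 < q.2) :
    z ∈ RectInt p q ↔ (p.1 < z.1 ∧ z.1 < q.1 ∧ p.2 < z.2 ∧ z.2 < q.2) := by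
  simp [RectInt, min_eq_left h1.le, max_eq_right h1.le, min_eq_left h2.le, max_eq_right h2.le,
    Set.mem_setOf_eq]

private lemma vsep_cons (D' : Finset Dem) (d0 : Dem) (hd0 : d0 ∈ D') (a0 : ℝ)
    (hb1 : min d0.1.1 d0.2.1 < a0) (hb2 : a0 < max d0.1.1 d0.2.1)
    (hdisj0 : ∀ e ∈ D', e ≠ d0 → VSeg a0 d0.1.2 d0.2.2 ∩ Rect e.1 e.2 = ∅)
    (hrec : VertSeparable (D'.erase d0)) : VertSeparable D' := by
  classical
  obtain ⟨e', a', hinj', hmem', hbnd', hdisj'⟩ := hrec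
  have hpos : 1 ≤ D'.card := Finset.card_pos.mpr ⟨d0, hd0⟩
  have hcc : D'.card = (D'.erase d0).card + 1 := by
    rw [Finset.card_erase_of_mem hd0]; omega
  have hidx : ∀ i : Fin D'.card, i.val ≠ 0 → i.val - 1 < (D'.erase d0).card := by
    intro i h
    have := i.isLt
    omega
  set E : Fin D'.card → Dem := fun i =>
    if h : i.val = 0 then d0 else e' ⟨i.val - 1, hidx i h⟩ with hE
  set A : Fin D'.card → ℝ := fun i =>
    if h : i.val = 0 then a0 else a' ⟨i.val - 1, hidx i h⟩ with hA
  have hE0 : ∀ i : Fin D'.card, i.val = 0 → E i = d0 := by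
    intro i h
    simp only [hE]
    rw [dif_pos h]
  have hEs : ∀ (i : Fin D'.card) (h : i.val ≠ 0), E i = e' ⟨i.val - 1, hidx i h⟩ := by
    intro i h
    simp only [hE]
    rw [dif_neg h]
  have hA0 : ∀ i : Fin D'.card, i.val = 0 → A i = a0 := by
    intro i h
    simp only [hA]
    rw [dif_pos h]
  have hAs : ∀ (i : Fin D'.card) (h : i.val ≠ 0), A i = a' ⟨i.val - 1, hidx i h⟩ := by
    intro i h
    simp only [hA]
    rw [dif_neg h]
  refine ⟨E, A, ?_, ?_, ?_, ?_⟩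
  · intro x y hxy
    by_cases hx : x.val = 0 <;> by_cases hy : y.val = 0
    · apply Fin.ext; omega
    · exfalso
      rw [hE0 x hx, hEs y hy] at hxy
      exact (Finset.ne_of_mem_erase (hmem' _)) hxy.symm
    · exfalso
      rw [hEs x hx, hE0 y hy] at hxy
      exact (Finset.ne_of_mem_erase (hmem' _)) hxy
    · rw [hEs x hx, hEs y hy] at hxy
      have := hinj' hxy
      have h2 := congrArg Fin.val this
      simp only at h2
      apply Fin.ext
      omega
  · intro i
    by_cases h : i.val = 0
    · rw [hE0 i h]; exact hd0
    · rw [hEs i h]; exact Finset.mem_of_mem_erase (hmem' _)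
  · intro i
    by_cases h : i.val = 0
    · rw [hE0 i h, hA0 i h]; exact ⟨hb1, hb2⟩
    · rw [hEs i h, hAs i h]; exact hbnd' _
  · intro i j hij
    have hijv : i.val < j.val := hij
    have hj : j.val ≠ 0 := by omega
    by_cases h : i.val = 0
    · rw [hE0 i h, hA0 i h, hEs j hj]
      exact hdisj0 _ (Finset.mem_of_mem_erase (hmem' _)) (Finset.ne_of_mem_erase (hmem' _))
    · rw [hEs i h, hAs i h, hEs j hj]
      exact hdisj' _ _ (by simp only [Fin.mk_lt_mk]; omega)

set_option maxHeartbeats 4000000 in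
private lemma asc_vsep (PS : Finset Pt) (hX : DistinctX PS) (hY : DistinctY PS) :
    ∀ (n : ℕ) (D' : Finset Dem), D'.card = n →
    (∀ d ∈ D', d.1 ∈ PS ∧ d.2 ∈ PS) →
    (∀ d ∈ D', d.1.1 < d.2.1 ∧ d.1.2 < d.2.2) →
    (∀ d ∈ D', ∀ e ∈ D', d ≠ e → NonConflicting d e) →
    VertSeparable D' := by
  classical
  have hXeq : ∀ z w : Pt, z ∈ PS → w ∈ PS → z.1 = w.1 → z = w := by
    intro z w hz hw h
    by_contra hne
    exact hX z hz w hw hne h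
  have hYeq : ∀ z w : Pt, z ∈ PS → w ∈ PS → z.2 = w.2 → z = w := by
    intro z w hz hw h
    by_contra hne
    exact hY z hz w hw hne h
  intro n
  induction n with
  | zero =>
    intro D' hcard _ _ _
    have hD : D' = ∅ := Finset.card_eq_zero.mp hcard
    subst hD
    refine ⟨fun i => (absurd i.isLt (by simp)), fun i => 0, ?_, ?_, ?_, ?_⟩
    · intro i; exact absurd i.isLt (by simp)
    · intro i; exact absurd i.isLt (by simp)
    · intro i; exact absurd i.isLt (by simp)
    · intro i; exact absurd i.isLt (by simp)
  | succ n IH =>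
    intro D' hcard hPS hasc hnc
    have hne : D'.Nonempty := Finset.card_pos.mp (by omega)
    -- select d0 : maximal right x-coordinate, then minimal left x-coordinate
    have hX1ne : (D'.image (fun d => d.2.1)).Nonempty := hne.image _
    set q1m := (D'.image (fun d => d.2.1)).max' hX1ne with hq1m
    have hCne : (D'.filter (fun d => d.2.1 = q1m)).Nonempty := by
      obtain ⟨dd, hdd, hddq⟩ := Finset.mem_image.mp ((D'.image (fun d => d.2.1)).max'_mem hX1ne)
      exact ⟨dd, Finset.mem_filter.mpr ⟨hdd, hddq⟩⟩
    have hX2ne : ((D'.filter (fun d => d.2.1 = q1m)).image (fun d => d.1.1)).Nonempty :=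
      hCne.image _
    obtain ⟨d0, hd0C, hd0x⟩ := Finset.mem_image.mp
      (((D'.filter (fun d => d.2.1 = q1m)).image (fun d => d.1.1)).min'_mem hX2ne)
    have hd0D : d0 ∈ D' := (Finset.mem_filter.mp hd0C).1
    have hd0q : d0.2.1 = q1m := (Finset.mem_filter.mp hd0C).2
    have hd0asc := hasc d0 hd0D
    have hd0PS := hPS d0 hd0D
    -- basic facts
    have F1 : ∀ e ∈ D', e.2.1 ≤ d0.2.1 := by
      intro e he
      have h2 := Finset.le_max' (D'.image (fun d => d.2.1)) e.2.1
        (Finset.mem_image_of_mem _ he)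
      rw [hd0q, hq1m]
      exact h2
    have F2 : ∀ e ∈ D', e.2.1 = d0.2.1 → e.2 = d0.2 := by
      intro e he h
      exact hXeq _ _ (hPS e he).2 hd0PS.2 h
    have F3 : ∀ e ∈ D', e.2 = d0.2 → d0.1.1 ≤ e.1.1 := by
      intro e he h
      have heC : e ∈ D'.filter (fun d => d.2.1 = q1m) :=
        Finset.mem_filter.mpr ⟨he, by rw [h, hd0q]⟩
      have h2 := Finset.min'_le _ e.1.1 (Finset.mem_image_of_mem (fun d => d.1.1) heC)
      rw [hd0x]
      exact h2
    have F4 : ∀ e ∈ D', e.1 = d0.1 → e ≠ d0 → e.2.1 < d0.2.1 ∧ d0.2.2 < e.2.2 := by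
      intro e he h1 h2
      have heasc := hasc e he
      have hlt : e.2.1 < d0.2.1 := by
        rcases lt_or_eq_of_le (F1 e he) with h | h
        · exact h
        · exfalso
          apply h2
          have := F2 e he h
          exact Prod.ext h1 this
      refine ⟨hlt, ?_⟩
      have hncc := (hnc d0 hd0D e he (fun hh => h2 hh.symm)).1
      have hc2 := hncc e.2 (corner_self₂ e.1 e.2)
      rw [mem_RectInt_asc hd0asc.1 hd0asc.2] at hc2
      push_neg at hc2
      have ha : d0.1.1 < e.2.1 := by rw [← h1]; exact heasc.1
      have hb : d0.1.2 < e.2.2 := by rw [← h1]; exact heasc.2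
      have hyge : d0.2.2 ≤ e.2.2 := hc2 ha hlt hb
      rcases lt_or_eq_of_le hyge with h | h
      · exact h
      · exfalso
        apply h2
        have : e.2 = d0.2 := hYeq _ _ (hPS e he).2 hd0PS.2 h.symm
        exact Prod.ext h1 this
    -- the blocked interval bound ℳ and the free zone up to N
    have hMne : (insert d0.1.1 ((D'.filter (fun ee => ee.1 = d0.1 ∧ ee ≠ d0)).image
        (fun ee => ee.2.1))).Nonempty := Finset.insert_nonempty _ _
    set M := (insert d0.1.1 ((D'.filter (fun ee => ee.1 = d0.1 ∧ ee ≠ d0)).image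
        (fun ee => ee.2.1))).max' hMne with hM
    have F5 : d0.1.1 ≤ M := by
      rw [hM]; exact Finset.le_max' _ _ (Finset.mem_insert_self _ _)
    have F6 : M < d0.2.1 := by
      have := Finset.max'_mem _ hMne
      rw [← hM] at this
      rcases Finset.mem_insert.mp this with h | h
      · rw [h]; exact hd0asc.1
      · obtain ⟨ee, hee, heq⟩ := Finset.mem_image.mp h
        have h1 := (Finset.mem_filter.mp hee).2
        rw [← heq]
        exact (F4 ee (Finset.mem_filter.mp hee).1 h1.1 h1.2).1
    have F7 : ∀ e ∈ D', e.1 = d0.1 → e ≠ d0 → e.2.1 ≤ M := by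
      intro e he h1 h2
      have hmem2 : e ∈ D'.filter (fun ee => ee.1 = d0.1 ∧ ee ≠ d0) :=
        Finset.mem_filter.mpr ⟨he, h1, h2⟩
      rw [hM]
      exact Finset.le_max' _ _ (Finset.mem_insert_of_mem
        (Finset.mem_image_of_mem (fun ee => ee.2.1) hmem2))
    have hNne : (insert d0.2.1 (((D'.erase d0).image (fun e => e.1.1)).filter
        (fun x => M < x))).Nonempty := Finset.insert_nonempty _ _
    set N := (insert d0.2.1 (((D'.erase d0).image (fun e => e.1.1)).filter
        (fun x => M < x))).min' hNne with hN
    have F8 : M < N := by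
      have := Finset.min'_mem _ hNne
      rw [← hN] at this
      rcases Finset.mem_insert.mp this with h | h
      · rw [h]; exact F6
      · rw [Finset.mem_filter] at h
        exact h.2
    have F8b : N ≤ d0.2.1 := by
      rw [hN]; exact Finset.min'_le _ _ (Finset.mem_insert_self _ _)
    have F9 : ∀ e ∈ D', e ≠ d0 → M < e.1.1 → N ≤ e.1.1 := by
      intro e he h1 h2
      have hmem2 : e ∈ D'.erase d0 := Finset.mem_erase.mpr ⟨h1, he⟩
      rw [hN]
      exact Finset.min'_le _ _ (Finset.mem_insert_of_mem (Finset.mem_filter.mpr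
        ⟨Finset.mem_image_of_mem (fun ee => ee.1.1) hmem2, h2⟩))
    set a0 := (M + N)/2 with ha0
    have ha0l : M < a0 := by rw [ha0]; linarith
    have ha0r : a0 < N := by rw [ha0]; linarith
    have ha0lo : d0.1.1 < a0 := lt_of_le_of_lt F5 ha0l
    have ha0hi : a0 < d0.2.1 := lt_of_lt_of_le ha0r F8b
    -- the key geometric fact: the segment at a0 avoids every other rectangle
    have F10 : ∀ e ∈ D', e ≠ d0 → VSeg a0 d0.1.2 d0.2.2 ∩ Rect e.1 e.2 = ∅ := by
      intro e he hned0
      have heasc := hasc e he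
      have hePS := hPS e he
      rw [Set.eq_empty_iff_forall_notMem]
      rintro z ⟨hz1, hz2⟩
      simp only [VSeg, Set.mem_setOf_eq] at hz1
      simp only [Rect, Set.mem_setOf_eq] at hz2
      rw [min_eq_left hd0asc.2.le, max_eq_right hd0asc.2.le] at hz1
      rw [min_eq_left heasc.1.le, max_eq_right heasc.1.le,
          min_eq_left heasc.2.le, max_eq_right heasc.2.le, hz1.1] at hz2
      -- notation: p := d0.1, q := d0.2, u := e.1, w := e.2, y := z.2
      obtain ⟨hy1, hy2⟩ := hz1.2
      obtain ⟨hxl, hxr, hy3, hy4⟩ := hz2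
      by_cases hu : e.1 = d0.1
      · have := F7 e he hu hned0
        linarith
      · by_cases hMlt : M < e.1.1
        · have := F9 e he hned0 hMlt
          linarith
        · push_neg at hMlt
          -- e.1.1 ≤ M, and a0 ≤ e.2.1 hence M < e.2.1
          have hwgtM : M < e.2.1 := lt_of_lt_of_le ha0l hxr
          have hwgtp : d0.1.1 < e.2.1 := lt_of_le_of_lt F5 hwgtM
          rcases lt_trichotomy e.1.1 d0.1.1 with hul | hul | hul
          · -- case (i) : u strictly left of p
            rcases lt_trichotomy e.1.2 d0.1.2 with hyy | hyy | hyy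
            · -- u below p : p is interior to R(e)
              have hw2 : d0.1.2 < e.2.2 := by
                rcases lt_or_eq_of_le (le_trans hy1 hy4 : d0.1.2 ≤ e.2.2) with h | h
                · exact h
                · exfalso
                  have : e.2 = d0.1 := hYeq _ _ hePS.2 hd0PS.1 h.symm
                  have h2 := congrArg Prod.fst this
                  linarith
              have := (hnc d0 hd0D e he (fun hh => hned0 hh.symm)).2 d0.1 (corner_self₁ _ _)
              rw [mem_RectInt_asc heasc.1 heasc.2] at this
              exact this ⟨hul, hwgtp, hyy, hw2⟩
            · -- equal y impossible
              have : e.1 = d0.1 := hYeq _ _ hePS.1 hd0PS.1 hyy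
              exact hu this
            · -- u above p : corner (w1, u2) interior to R(d0)
              have hu2q : e.1.2 < d0.2.2 := by
                rcases lt_or_eq_of_le (le_trans hy3 hy2 : e.1.2 ≤ d0.2.2) with h | h
                · exact h
                · exfalso
                  have : e.1 = d0.2 := hYeq _ _ hePS.1 hd0PS.2 h
                  have h2 := congrArg Prod.fst this
                  linarith
              have hw1q : e.2.1 < d0.2.1 := by
                rcases lt_or_eq_of_le (F1 e he) with h | h
                · exact h
                · exfalso
                  have := F3 e he (F2 e he h)
                  linarith
              have := (hnc d0 hd0D e he (fun hh => hned0 hh.symm)).1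
                ((e.2.1, e.1.2) : Pt) (corner_mix₂ e.1 e.2)
              rw [mem_RectInt_asc hd0asc.1 hd0asc.2] at this
              exact this ⟨hwgtp, hw1q, hyy, hu2q⟩
          · -- case (ii) : equal x impossible
            have : e.1 = d0.1 := hXeq _ _ hePS.1 hd0PS.1 hul
            exact hu this
          · -- case (iii) : u strictly right of p ; a left classmate e* exists
            have hMgtp : d0.1.1 < M := lt_of_lt_of_le hul hMlt
            have hMmem := Finset.max'_mem _ hMne
            rw [← hM] at hMmem
            rcases Finset.mem_insert.mp hMmem with hMp | hMcm
            · exfalso; rw [hMp] at hMgtp; exact lt_irrefl _ hMgtp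
            obtain ⟨es, hesF, hesM⟩ := Finset.mem_image.mp hMcm
            have hesD : es ∈ D' := (Finset.mem_filter.mp hesF).1
            have hes1 : es.1 = d0.1 := (Finset.mem_filter.mp hesF).2.1
            have hesne : es ≠ d0 := (Finset.mem_filter.mp hesF).2.2
            have hesasc := hasc es hesD
            have hesPS := hPS es hesD
            have hF4es := F4 es hesD hes1 hesne
            -- es.2.1 = M, es.2.2 > d0.2.2
            rcases lt_trichotomy e.1.1 M with huM | huM | huM
            ·  -- u strictly left of v* = es.2
              rcases lt_trichotomy e.1.2 d0.1.2 with hyy | hyy | hyy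
              · -- u below p
                have hw2p : d0.1.2 < e.2.2 := by
                  rcases lt_or_eq_of_le (le_trans hy1 hy4 : d0.1.2 ≤ e.2.2) with h | h
                  · exact h
                  · exfalso
                    have : e.2 = d0.1 := hYeq _ _ hePS.2 hd0PS.1 h.symm
                    have h2 := congrArg Prod.fst this
                    linarith
                rcases lt_trichotomy e.2.2 es.2.2 with hw | hw | hw
                · -- corner (u1, w2) of e interior to R(es)
                  have hes_asc2 : es.1.2 < es.2.2 := hesasc.2
                  have := (hnc es hesD e he (by
                    intro hh
                    rw [hh] at hes1
                    exact hu hes1)).1 ((e.1.1, e.2.2) : Pt) (corner_mix₁ e.1 e.2)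
                  rw [mem_RectInt_asc hesasc.1 hesasc.2] at this
                  apply this
                  constructor
                  · rw [hes1]; exact hul
                  refine ⟨?_, ?_, ?_⟩
                  · rw [hesM]; exact huM
                  · rw [hes1]; exact hw2p
                  · exact hw
                · -- w = es.2 impossible
                  exfalso
                  have : e.2 = es.2 := hYeq _ _ hePS.2 hesPS.2 hw
                  have h2 := congrArg Prod.fst this
                  rw [hesM] at h2
                  linarith
                · -- v* interior to R(e)
                  have := (hnc e he es hesD (by
                    intro hh
                    rw [hh] at hu
                    exact hu hes1)).1 es.2 (corner_self₂ es.1 es.2)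
                  rw [mem_RectInt_asc heasc.1 heasc.2] at this
                  apply this
                  refine ⟨?_, ?_, ?_, ?_⟩
                  · rw [hesM]; exact huM
                  · rw [hesM]; exact hwgtM
                  · have : d0.1.2 < es.2.2 := lt_trans hd0asc.2 hF4es.2
                    linarith
                  · exact hw
              · -- equal y impossible
                have : e.1 = d0.1 := hYeq _ _ hePS.1 hd0PS.1 hyy
                exact hu this
              · -- u above p : u interior to R(es)
                have hu2q : e.1.2 < d0.2.2 := by
                  rcases lt_or_eq_of_le (le_trans hy3 hy2 : e.1.2 ≤ d0.2.2) with h | h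
                  · exact h
                  · exfalso
                    have : e.1 = d0.2 := hYeq _ _ hePS.1 hd0PS.2 h
                    have h2 := congrArg Prod.fst this
                    linarith
                have := (hnc es hesD e he (by
                  intro hh
                  rw [hh] at hes1
                  exact hu hes1)).1 e.1 (corner_self₁ e.1 e.2)
                rw [mem_RectInt_asc hesasc.1 hesasc.2] at this
                apply this
                constructor
                · rw [hes1]; exact hul
                refine ⟨?_, ?_, ?_⟩
                · rw [hesM]; exact huM
                · rw [hes1]; exact hyy
                · exact lt_trans hu2q hF4es.2
            · -- u = v* impossible : then y ≤ q2 < u2 ≤ y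
              exfalso
              have : e.1 = es.2 := by
                apply hXeq _ _ hePS.1 hesPS.2
                rw [huM, hesM]
              have h2 := congrArg Prod.snd this
              have : d0.2.2 < e.1.2 := by rw [h2]; exact hF4es.2
              linarith
            · -- u1 > M contradicts hMlt
              exact absurd huM (not_lt.mpr hMlt)
    -- recurse on the rest
    have hcard' : (D'.erase d0).card = n := by
      rw [Finset.card_erase_of_mem hd0D, hcard]
      omega
    obtain ⟨e', a', hinj', hmem', hbnd', hdisj'⟩ := IH (D'.erase d0) hcard'
      (fun d hd => hPS d (Finset.mem_of_mem_erase hd))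
      (fun d hd => hasc d (Finset.mem_of_mem_erase hd))
      (fun d hd ee hee hne2 => hnc d (Finset.mem_of_mem_erase hd) ee
        (Finset.mem_of_mem_erase hee) hne2)
    exact vsep_cons D' d0 hd0D a0
      (by rw [min_eq_left hd0asc.1.le]; exact ha0lo)
      (by rw [max_eq_right hd0asc.1.le]; exact ha0hi)
      F10
      ⟨e', a', hinj', hmem', hbnd', hdisj'⟩

end PartA

section PartFlip

private def yflip (z : Pt) : Pt := (z.1, -z.2)

private def dflip (d : Dem) : Dem := (yflip d.1, yflip d.2)

private lemma yflip_inj : Function.Injective yflip := by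
  intro a b h
  simp only [yflip, Prod.mk.injEq] at h
  exact Prod.ext h.1 (by linarith [h.2])

private lemma dflip_inj : Function.Injective dflip := by
  intro a b h
  simp only [dflip, Prod.mk.injEq] at h
  exact Prod.ext (yflip_inj h.1) (yflip_inj h.2)

private lemma dflip_invol (d : Dem) : dflip (dflip d) = d := by
  simp only [dflip, yflip]
  exact Prod.ext (Prod.ext rfl (by simp)) (Prod.ext rfl (by simp))

private lemma mem_RectInt_flip (p q z : Pt) :
    yflip z ∈ RectInt (yflip p) (yflip q) ↔ z ∈ RectInt p q := by
  simp only [RectInt, yflip, Set.mem_setOf_eq, min_neg_neg, max_neg_neg]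
  constructor
  · rintro ⟨h1, h2, h3, h4⟩
    exact ⟨h1, h2, by linarith, by linarith⟩
  · rintro ⟨h1, h2, h3, h4⟩
    exact ⟨h1, h2, by linarith, by linarith⟩

private lemma corners_flip_rev (p q c : Pt) (h : c ∈ Corners (yflip p) (yflip q)) :
    ∃ c', c' ∈ Corners p q ∧ c = yflip c' := by
  simp only [Corners, yflip, Set.mem_insert_iff, Set.mem_singleton_iff] at h
  rcases h with h | h | h | h
  · exact ⟨(p.1, p.2), by simp [Corners], by rw [h]; rfl⟩
  · exact ⟨(p.1, q.2), by simp [Corners], by rw [h]; rfl⟩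
  · exact ⟨(q.1, p.2), by simp [Corners], by rw [h]; rfl⟩
  · exact ⟨(q.1, q.2), by simp [Corners], by rw [h]; rfl⟩

private lemma nonconf_flip (d e : Dem) (h : NonConflicting d e) :
    NonConflicting (dflip d) (dflip e) := by
  obtain ⟨h1, h2⟩ := h
  constructor
  · intro c hc hmem
    obtain ⟨c', hc', rfl⟩ := corners_flip_rev e.1 e.2 c hc
    rw [show (dflip d).1 = yflip d.1 from rfl, show (dflip d).2 = yflip d.2 from rfl,
      mem_RectInt_flip] at hmem
    exact h1 c' hc' hmem
  · intro c hc hmem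
    obtain ⟨c', hc', rfl⟩ := corners_flip_rev d.1 d.2 c hc
    rw [show (dflip e).1 = yflip e.1 from rfl, show (dflip e).2 = yflip e.2 from rfl,
      mem_RectInt_flip] at hmem
    exact h2 c' hc' hmem

private lemma seg_rect_flip (x y1 y2 : ℝ) (p q : Pt)
    (h : VSeg x y1 y2 ∩ Rect p q = ∅) :
    VSeg x (-y1) (-y2) ∩ Rect (yflip p) (yflip q) = ∅ := by
  rw [Set.eq_empty_iff_forall_notMem] at h ⊢
  rintro z ⟨hz1, hz2⟩
  simp only [VSeg, Set.mem_setOf_eq, min_neg_neg, max_neg_neg] at hz1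
  simp only [Rect, yflip, Set.mem_setOf_eq, min_neg_neg, max_neg_neg] at hz2
  apply h ((z.1, -z.2) : Pt)
  have e1 : ((z.1, -z.2) : Pt).1 = z.1 := rfl
  have e2 : ((z.1, -z.2) : Pt).2 = -z.2 := rfl
  refine ⟨⟨e1.trans hz1.1, ?_, ?_⟩, ?_, ?_, ?_, ?_⟩
  · rw [e2]; linarith [hz1.2.2]
  · rw [e2]; linarith [hz1.2.1]
  · rw [e1]; exact hz2.1
  · rw [e1]; exact hz2.2.1
  · rw [e2]; linarith [hz2.2.2.2]
  · rw [e2]; linarith [hz2.2.2.1]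

private lemma vsep_flip (D' : Finset Dem) (h : VertSeparable (D'.image dflip)) :
    VertSeparable D' := by
  classical
  obtain ⟨e, a, hinj, hmem, hbnd, hdisj⟩ := h
  have hcard : (Finset.image dflip D').card = D'.card :=
    Finset.card_image_of_injective _ dflip_inj
  refine ⟨fun i => dflip (e (Fin.cast hcard.symm i)), fun i => a (Fin.cast hcard.symm i),
    ?_, ?_, ?_, ?_⟩
  · intro x y hxy
    have h2 := dflip_inj hxy
    have h3 := hinj h2
    have h4 := congrArg Fin.val h3
    exact Fin.ext h4
  · intro i
    show dflip (e (Fin.cast hcard.symm i)) ∈ D'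
    have := hmem (Fin.cast hcard.symm i)
    obtain ⟨d, hd, hded⟩ := Finset.mem_image.mp this
    rw [← hded, dflip_invol]
    exact hd
  · intro i
    exact hbnd (Fin.cast hcard.symm i)
  · intro i j hij
    have hij' : Fin.cast hcard.symm i < Fin.cast hcard.symm j := hij
    have h0 := hdisj _ _ hij'
    have h1 := seg_rect_flip (a (Fin.cast hcard.symm i))
      ((e (Fin.cast hcard.symm i)).1.2) ((e (Fin.cast hcard.symm i)).2.2)
      ((e (Fin.cast hcard.symm j)).1) ((e (Fin.cast hcard.symm j)).2) h0
    exact h1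

end PartFlip

/-- For any MinGMConn instance with pairwise distinct x- and y-coordinates,
`(1/2)·IR(P,D) ≤ VS(P,D)` and `VS(P,D) ≤ 2·opt(P,D)`. -/
theorem stmt1 (P : Finset Pt) (D : Finset Dem)
    (hinst : IsInstance P D) (hX : DistinctX P) (hY : DistinctY P) :
    IRN ↑D ≤ 2 * VSN ↑D ∧ VSN ↑D ≤ 2 * optN ↑P ↑D := by
  classical
  -- the sets defining the optimization quantities
  set SIR := {n | ∃ D' : Finset Dem, ↑D' ⊆ (↑D : Set Dem) ∧ D'.card = n ∧
    ∀ d ∈ D', ∀ e ∈ D', d ≠ e → NonConflicting d e} with hSIR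
  set SVS := {n | ∃ D' : Finset Dem, ↑D' ⊆ (↑D : Set Dem) ∧ D'.card = n ∧ VertSeparable D'}
    with hSVS
  have hIRdef : IRN ↑D = sSup SIR := rfl
  have hVSdef : VSN ↑D = sSup SVS := rfl
  have hbddVS : BddAbove SVS := by
    refine ⟨D.card, ?_⟩
    rintro n ⟨D', hsub, hcard, _⟩
    rw [← hcard]
    exact Finset.card_le_card (Finset.coe_subset.mp hsub)
  have hbddIR : BddAbove SIR := by
    refine ⟨D.card, ?_⟩
    rintro n ⟨D', hsub, hcard, _⟩
    rw [← hcard]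
    exact Finset.card_le_card (Finset.coe_subset.mp hsub)
  have h0VS : (0 : ℕ) ∈ SVS := by
    refine ⟨∅, by simp, rfl, ?_⟩
    exact asc_vsep P hX hY 0 ∅ rfl (by simp) (by simp) (by simp)
  have h0IR : (0 : ℕ) ∈ SIR := ⟨∅, by simp, rfl, by simp⟩
  constructor
  · -- IRN ≤ 2 * VSN
    rw [hIRdef]
    apply csSup_le ⟨0, h0IR⟩
    rintro n ⟨Dind, hsub, hcard, hindep⟩
    have hsub' : Dind ⊆ D := Finset.coe_subset.mp hsub
    set Dasc := Dind.filter (fun d => d.1.2 < d.2.2) with hDasc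
    set Ddesc := Dind.filter (fun d => ¬ d.1.2 < d.2.2) with hDdesc
    have hsplit : Dasc.card + Ddesc.card = Dind.card :=
      Finset.card_filter_add_card_filter_not _
    -- ascending part is vertically separable
    have hvs1 : VertSeparable Dasc := by
      apply asc_vsep P hX hY Dasc.card Dasc rfl
      · intro d hd
        have := hinst d (hsub' (Finset.mem_of_mem_filter d hd))
        exact ⟨this.1, this.2.1⟩
      · intro d hd
        refine ⟨(hinst d (hsub' (Finset.mem_of_mem_filter d hd))).2.2, ?_⟩
        exact (Finset.mem_filter.mp hd).2
      · intro d hd e he hne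
        exact hindep d (Finset.mem_of_mem_filter d hd) e (Finset.mem_of_mem_filter e he) hne
    -- descending part is vertically separable (via the vertical flip)
    have hvs2 : VertSeparable Ddesc := by
      apply vsep_flip
      apply asc_vsep (P.image yflip) ?_ ?_ (Ddesc.image dflip).card _ rfl
      · -- endpoints in flipped point set
        intro d' hd'
        obtain ⟨d, hd, rfl⟩ := Finset.mem_image.mp hd'
        have hdD := hsub' (Finset.mem_of_mem_filter d hd)
        have := hinst d hdD
        constructor
        · exact Finset.mem_image_of_mem yflip this.1
        · exact Finset.mem_image_of_mem yflip this.2.1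
      · -- ascending after flip
        intro d' hd'
        obtain ⟨d, hd, rfl⟩ := Finset.mem_image.mp hd'
        have hdD := hsub' (Finset.mem_of_mem_filter d hd)
        have hxlt := (hinst d hdD).2.2
        have hdesc : d.2.2 < d.1.2 := by
          have hnlt := (Finset.mem_filter.mp hd).2
          have hne2 : d.1 ≠ d.2 := by
            intro hcontra
            rw [hcontra] at hxlt
            exact lt_irrefl _ hxlt
          have := hY d.1 (hinst d hdD).1 d.2 (hinst d hdD).2.1 hne2
          rcases lt_trichotomy d.1.2 d.2.2 with h | h | h
          · exact absurd h hnlt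
          · exact absurd h this
          · exact h
        constructor
        · exact hxlt
        · show -d.1.2 < -d.2.2
          linarith
      · -- pairwise non-conflicting after flip
        intro d' hd' e' he' hne
        obtain ⟨d, hd, rfl⟩ := Finset.mem_image.mp hd'
        obtain ⟨e, he, rfl⟩ := Finset.mem_image.mp he'
        have hdne : d ≠ e := by
          intro hcontra
          rw [hcontra] at hne
          exact hne rfl
        exact nonconf_flip d e (hindep d (Finset.mem_of_mem_filter d hd) e
          (Finset.mem_of_mem_filter e he) hdne)
      · -- DistinctX for the flipped point set
        intro p' hp' q' hq' hne
        obtain ⟨p, hp, rfl⟩ := Finset.mem_image.mp hp'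
        obtain ⟨q, hq, rfl⟩ := Finset.mem_image.mp hq'
        have : p ≠ q := by
          intro hcontra
          rw [hcontra] at hne
          exact hne rfl
        exact hX p hp q hq this
      · -- DistinctY for the flipped point set
        intro p' hp' q' hq' hne
        obtain ⟨p, hp, rfl⟩ := Finset.mem_image.mp hp'
        obtain ⟨q, hq, rfl⟩ := Finset.mem_image.mp hq'
        have hpq : p ≠ q := by
          intro hcontra
          rw [hcontra] at hne
          exact hne rfl
        have := hY p hp q hq hpq
        show -p.2 ≠ -q.2
        intro hcontra
        apply this
        linarith
    have hm1 : Dasc.card ∈ SVS := by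
      refine ⟨Dasc, ?_, rfl, hvs1⟩
      refine subset_trans ?_ hsub
      exact Finset.coe_subset.mpr (Finset.filter_subset _ _)
    have hm2 : Ddesc.card ∈ SVS := by
      refine ⟨Ddesc, ?_, rfl, hvs2⟩
      refine subset_trans ?_ hsub
      exact Finset.coe_subset.mpr (Finset.filter_subset _ _)
    have le1 : Dasc.card ≤ sSup SVS := le_csSup hbddVS hm1
    have le2 : Ddesc.card ≤ sSup SVS := le_csSup hbddVS hm2
    rw [hVSdef]
    omega
  · -- VSN ≤ 2 * optN
    -- a feasible solution exists: the grid completion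
    have hfeas : MFeasible ↑P ↑D ↑(D.image (fun d => ((d.2.1, d.1.2) : Pt))) := by
      intro d hd
      have hdD : d ∈ D := Finset.mem_coe.mp hd
      have hPts := hinst d hdD
      refine ⟨2, ![d.1, (d.2.1, d.1.2), d.2], rfl, rfl, ?_, ?_, ?_⟩
      · intro i
        fin_cases i
        · exact Or.inl (Finset.mem_coe.mpr hPts.1)
        · exact Or.inr (Finset.mem_coe.mpr (Finset.mem_image_of_mem _ hdD))
        · exact Or.inl (Finset.mem_coe.mpr hPts.2.1)
      · intro i
        fin_cases i
        · exact Or.inr rfl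
        · exact Or.inl rfl
      · rw [Fin.sum_univ_two]
        show dist1 d.1 (d.2.1, d.1.2) + dist1 (d.2.1, d.1.2) d.2 = dist1 d.1 d.2
        simp [dist1]
    set Sopt := {n | ∃ Q : Finset Pt, MFeasible ↑P ↑D ↑Q ∧ Q.card = n} with hSopt
    have hoptdef : optN ↑P ↑D = sInf Sopt := rfl
    have hSoptne : Sopt.Nonempty := ⟨_, _, hfeas, rfl⟩
    have hopt_mem : sInf Sopt ∈ Sopt := Nat.sInf_mem hSoptne
    obtain ⟨Qopt, hQfeas, hQcard⟩ := hopt_mem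
    have hvsopt : VSN ↑D ≤ optN ↑P ↑D := by
      rw [hVSdef, hoptdef]
      apply csSup_le ⟨0, h0VS⟩
      rintro n ⟨D', hsub, hcard, hvs⟩
      rw [← hcard, ← hQcard]
      exact vsep_le_card P D hinst hY D' (fun d hd => Finset.mem_coe.mp (hsub hd)) hvs
        Qopt hQfeas
    omega
end

section
/- Let (P,D) be a MinGMConn instance in which all input points have pairwise distinct x-coordinates and pairwise distinct y-coordinates, suppose D is monotone (y(p) < y(q) for every demand (p,q)) and D itself is vertically separable, and let Q be a feasible solution with Q ∩ P = ∅ and |Q| = |D|. Then there exists a bijection c : Q → D such that q ∈ R(c(q)) for every q ∈ Q; in particular, for every subset Q' ⊆ Q there are at least |Q'| distinct demands of D whose demand rectangles each contain some point of Q'. -/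
section AuxProofs

-- telescoping bounds
lemma abs_telescope (g : ℕ → ℝ) (n : ℕ) :
    |g n - g 0| ≤ ∑ i ∈ Finset.range n, |g (i+1) - g i| := by
  calc |g n - g 0| = |∑ i ∈ Finset.range n, (g (i+1) - g i)| := by
        rw [Finset.sum_range_sub]
    _ ≤ ∑ i ∈ Finset.range n, |g (i+1) - g i| := Finset.abs_sum_le_sum_abs _ _

lemma abs_telescope_split (g : ℕ → ℝ) {t n : ℕ} (h : t ≤ n) :
    |g t - g 0| + |g n - g t| ≤ ∑ i ∈ Finset.range n, |g (i+1) - g i| := by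
  have h1 : |g t - g 0| ≤ ∑ i ∈ Finset.range t, |g (i+1) - g i| := abs_telescope g t
  have h2 : |g n - g t| ≤ ∑ i ∈ Finset.Ico t n, |g (i+1) - g i| := by
    have := abs_telescope (fun j => g (t + j)) (n - t)
    simp only [add_zero] at this
    rw [Nat.add_sub_cancel' h] at this
    calc |g n - g t| ≤ ∑ i ∈ Finset.range (n - t), |g (t + (i+1)) - g (t + i)| := by
          convert this using 3
    _ = ∑ i ∈ Finset.Ico t n, |g (i+1) - g i| := by
          rw [Finset.sum_Ico_eq_sum_range]
          apply Finset.sum_congr rfl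
          intro i _
          congr 1 <;> omega
  calc |g t - g 0| + |g n - g t|
      ≤ (∑ i ∈ Finset.range t, |g (i+1) - g i|) + ∑ i ∈ Finset.Ico t n, |g (i+1) - g i| :=
        add_le_add h1 h2
    _ = ∑ i ∈ Finset.range n, |g (i+1) - g i| := Finset.sum_range_add_sum_Ico _ h

lemma exists_crossing {S : Set Pt} {p q : Pt} (h : MConnected S p q)
    (hx : p.1 < q.1) (hy : p.2 ≤ q.2) {a : ℝ} (ha1 : p.1 < a) (ha2 : a < q.1)
    (havoid : ∀ z ∈ S, z.1 ≠ a) :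
    ∃ u v : Pt, u ∈ S ∧ v ∈ S ∧ u.2 = v.2 ∧ u.1 < a ∧ a < v.1 ∧
      u ∈ Rect p q ∧ v ∈ Rect p q := by
  obtain ⟨k, f, h0, hl, hS, hal, hsum⟩ := h
  set F : ℕ → Pt := fun n => f ⟨min n k, Nat.lt_succ_of_le (min_le_right n k)⟩ with hF
  have hFle : ∀ n (hn : n ≤ k), F n = f ⟨n, Nat.lt_succ_of_le hn⟩ := by
    intro n hn; simp only [hF]; congr 1; exact Fin.ext (by simp [Nat.min_eq_left hn])
  have hF0 : F 0 = p := by rw [hFle 0 (Nat.zero_le k)]; exact h0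
  have hFk : F k = q := by rw [hFle k le_rfl]; exact hl
  have hFS : ∀ n, F n ∈ S := fun n => hS _
  have hsum' : (∑ i ∈ Finset.range k, (|(F (i+1)).1 - (F i).1| + |(F (i+1)).2 - (F i).2|))
      = (q.1 - p.1) + (q.2 - p.2) := by
    have e1 : ∀ i : Fin k, dist1 (f i.castSucc) (f i.succ)
        = |(F (i.val+1)).1 - (F i.val).1| + |(F (i.val+1)).2 - (F i.val).2| := by
      intro i
      have h1 : f i.castSucc = F i.val := by
        rw [hFle i.val (le_of_lt i.isLt)]; congr 1
      have h2 : f i.succ = F (i.val + 1) := by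
        rw [hFle (i.val+1) i.isLt]; congr 1
      rw [h1, h2, dist1, abs_sub_comm, abs_sub_comm (F i.val).2]
    rw [← Fin.sum_univ_eq_sum_range (fun i => |(F (i+1)).1 - (F i).1| + |(F (i+1)).2 - (F i).2|) k]
    rw [← Finset.sum_congr rfl (fun i _ => e1 i), hsum, dist1]
    rw [abs_of_nonpos (by linarith), abs_of_nonpos (by linarith)]; ring
  set Sx := ∑ i ∈ Finset.range k, |(F (i+1)).1 - (F i).1| with hSx
  set Sy := ∑ i ∈ Finset.range k, |(F (i+1)).2 - (F i).2| with hSy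
  have hsplit : Sx + Sy = (q.1 - p.1) + (q.2 - p.2) := by
    rw [hSx, hSy, ← Finset.sum_add_distrib]; exact hsum'
  have hSxlb : q.1 - p.1 ≤ Sx := by
    have := abs_telescope (fun n => (F n).1) k
    rw [hF0, hFk] at *
    calc q.1 - p.1 ≤ |q.1 - p.1| := le_abs_self _
      _ ≤ Sx := by simpa [hF0, hFk] using this
  have hSylb : q.2 - p.2 ≤ Sy := by
    have := abs_telescope (fun n => (F n).2) k
    calc q.2 - p.2 ≤ |q.2 - p.2| := le_abs_self _
      _ ≤ Sy := by simpa [hF0, hFk] using this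
  have hSxeq : Sx ≤ q.1 - p.1 := by linarith
  have hSyeq : Sy ≤ q.2 - p.2 := by linarith
  -- every vertex is in the rectangle
  have hvert : ∀ t, t ≤ k → F t ∈ Rect p q := by
    intro t ht
    have hx1 := abs_telescope_split (fun n => (F n).1) ht
    have hy1 := abs_telescope_split (fun n => (F n).2) ht
    simp only [hF0, hFk] at hx1 hy1
    rw [← hSx] at hx1; rw [← hSy] at hy1
    have b1 : p.1 - (F t).1 ≤ |(F t).1 - p.1| := by rw [abs_sub_comm]; exact le_abs_self _
    have b2 : q.1 - (F t).1 ≤ |q.1 - (F t).1| := le_abs_self _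
    have b3 : (F t).1 - p.1 ≤ |(F t).1 - p.1| := le_abs_self _
    have b4 : (F t).1 - q.1 ≤ |q.1 - (F t).1| := by rw [abs_sub_comm]; exact le_abs_self _
    have c1 : p.2 - (F t).2 ≤ |(F t).2 - p.2| := by rw [abs_sub_comm]; exact le_abs_self _
    have c2 : q.2 - (F t).2 ≤ |q.2 - (F t).2| := le_abs_self _
    have c3 : (F t).2 - p.2 ≤ |(F t).2 - p.2| := le_abs_self _
    have c4 : (F t).2 - q.2 ≤ |q.2 - (F t).2| := by rw [abs_sub_comm]; exact le_abs_self _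
    refine ⟨le_trans (min_le_left _ _) (by linarith), le_trans (by linarith) (le_max_right _ _),
      le_trans (min_le_left _ _) (by linarith), le_trans (by linarith) (le_max_right _ _)⟩
  -- find the crossing edge
  have hexk : k ≤ k ∧ a < (F k).1 := ⟨le_rfl, by rw [hFk]; exact ha2⟩
  classical
  have hex : ∃ t, t ≤ k ∧ a < (F t).1 := ⟨k, hexk⟩
  set t0 := Nat.find hex with ht0def
  have ht0 : t0 ≤ k ∧ a < (F t0).1 := Nat.find_spec hex
  have ht0le : t0 ≤ k := ht0.1
  have ht0pos : t0 ≠ 0 := by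
    intro h0'
    have := ht0.2; rw [h0', hF0] at this; linarith
  obtain ⟨i, hi⟩ : ∃ i, t0 = i + 1 := ⟨t0 - 1, by omega⟩
  have hik : i < k := by omega
  have hnotspec : ¬ (i ≤ k ∧ a < (F i).1) := Nat.find_min hex (by omega)
  have hFi : (F i).1 < a := by
    have h1 : ¬ a < (F i).1 := fun hc => hnotspec ⟨by omega, hc⟩
    have h2 : (F i).1 ≠ a := havoid _ (hFS i)
    cases lt_or_eq_of_le (not_lt.mp h1) with
    | inl h => exact h
    | inr h => exact absurd h h2
  have hFi1 : a < (F (i+1)).1 := by rw [← hi]; exact ht0.2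
  have hedge : Aligned (F i) (F (i+1)) := by
    have h1 : f (Fin.castSucc ⟨i, hik⟩) = F i := by
      rw [hFle i (le_of_lt hik)]; congr 1
    have h2 : f (Fin.succ ⟨i, hik⟩) = F (i+1) := by
      rw [hFle (i+1) hik]; congr 1
    rw [← h1, ← h2]; exact hal ⟨i, hik⟩
  have hsamey : (F i).2 = (F (i+1)).2 := by
    cases hedge with
    | inl h => exact absurd h (by intro hh; rw [hh] at hFi; linarith)
    | inr h => exact h
  exact ⟨F i, F (i+1), hFS i, hFS (i+1), hsamey, hFi, hFi1,
    hvert i (le_of_lt hik), hvert (i+1) hik⟩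

lemma vseg_rect_empty_iff {a y1 y2 : ℝ} {p q : Pt} :
    VSeg a y1 y2 ∩ Rect p q = ∅ ↔
      ((a < min p.1 q.1 ∨ max p.1 q.1 < a) ∨
       (max y1 y2 < min p.2 q.2 ∨ max p.2 q.2 < min y1 y2)) := by
  constructor
  · intro h
    by_contra hc
    push_neg at hc
    obtain ⟨⟨h1, h2⟩, h3, h4⟩ := hc
    have hmem : (a, max (min y1 y2) (min p.2 q.2)) ∈ VSeg a y1 y2 ∩ Rect p q := by
      constructor
      · exact ⟨rfl, le_max_left _ _, max_le min_le_max h3⟩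
      · exact ⟨h1, h2, le_max_right _ _, max_le h4 min_le_max⟩
    rw [h] at hmem; exact hmem
  · intro h
    rw [Set.eq_empty_iff_forall_notMem]
    rintro z ⟨⟨hz1, hz2, hz3⟩, hr1, hr2, hr3, hr4⟩
    rcases h with (h | h) | (h | h) <;> subst hz1 <;> linarith

lemma perturb_s2 {a lo hi : ℝ} (hlo : lo < a) (hhi : a < hi) {y1 y2 : ℝ} {n : ℕ}
    (R : Fin n → Dem) (J : Finset (Fin n))
    (hsep : ∀ j ∈ J, VSeg a y1 y2 ∩ Rect (R j).1 (R j).2 = ∅)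
    (B : Finset ℝ) :
    ∃ a', a' ∉ B ∧ lo < a' ∧ a' < hi ∧
      ∀ j ∈ J, VSeg a' y1 y2 ∩ Rect (R j).1 (R j).2 = ∅ := by
  classical
  set U : Set ℝ := Set.Ioo lo hi ∩
    ⋂ j ∈ J, {x | VSeg x y1 y2 ∩ Rect (R j).1 (R j).2 = ∅} with hU
  have hopen : IsOpen U := by
    apply IsOpen.inter isOpen_Ioo
    apply isOpen_biInter_finset
    intro j _
    have hset : {x | VSeg x y1 y2 ∩ Rect (R j).1 (R j).2 = ∅}
        = {x | (x < min (R j).1.1 (R j).2.1 ∨ max (R j).1.1 (R j).2.1 < x) ∨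
            (max y1 y2 < min (R j).1.2 (R j).2.2 ∨ max (R j).1.2 (R j).2.2 < min y1 y2)} := by
      ext x; exact vseg_rect_empty_iff
    rw [hset]
    by_cases hC : (max y1 y2 < min (R j).1.2 (R j).2.2 ∨ max (R j).1.2 (R j).2.2 < min y1 y2)
    · have : {x : ℝ | (x < min (R j).1.1 (R j).2.1 ∨ max (R j).1.1 (R j).2.1 < x) ∨
            (max y1 y2 < min (R j).1.2 (R j).2.2 ∨ max (R j).1.2 (R j).2.2 < min y1 y2)}
          = Set.univ := by
        ext x
        simp only [Set.mem_setOf_eq, Set.mem_univ, iff_true]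
        exact Or.inr hC
      rw [this]; exact isOpen_univ
    · have : {x : ℝ | (x < min (R j).1.1 (R j).2.1 ∨ max (R j).1.1 (R j).2.1 < x) ∨
            (max y1 y2 < min (R j).1.2 (R j).2.2 ∨ max (R j).1.2 (R j).2.2 < min y1 y2)}
          = {x : ℝ | x < min (R j).1.1 (R j).2.1} ∪ {x : ℝ | max (R j).1.1 (R j).2.1 < x} := by
        ext x
        simp only [Set.mem_setOf_eq, Set.mem_union]
        tauto
      rw [this]
      exact IsOpen.union (isOpen_lt continuous_id continuous_const)
        (isOpen_lt continuous_const continuous_id)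
  have haU : a ∈ U := by
    refine ⟨⟨hlo, hhi⟩, ?_⟩
    simp only [Set.mem_iInter]
    intro j hj; exact hsep j hj
  obtain ⟨ε, hε, hball⟩ := Metric.isOpen_iff.mp hopen a haU
  rw [Real.ball_eq_Ioo] at hball
  have hinf : (Set.Ioo (a - ε) (a + ε)).Infinite := Set.Ioo_infinite (by linarith)
  obtain ⟨a', ha'⟩ := (hinf.diff (B.finite_toSet)).nonempty
  obtain ⟨ha'mem, ha'B⟩ := ha'
  have ha'U : a' ∈ U := hball ha'mem
  obtain ⟨⟨h1, h2⟩, h3⟩ := ha'U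
  refine ⟨a', ha'B, h1, h2, ?_⟩
  intro j hj
  simp only [Set.mem_iInter] at h3
  exact h3 j hj

attribute [local instance] Classical.propDecidable

open Finset in
lemma core_count (P Q : Finset Pt)
    (hY : ∀ p ∈ P, ∀ q ∈ P, p ≠ q → p.2 ≠ q.2) (m : ℕ)
    (d : Fin m → Dem) (a : Fin m → ℝ) (u v : Fin m → Pt)
    (huS : ∀ i, u i ∈ (↑P ∪ ↑Q : Set Pt)) (hvS : ∀ i, v i ∈ (↑P ∪ ↑Q : Set Pt))
    (huv : ∀ i, (u i).2 = (v i).2)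
    (hlt : ∀ i, (u i).1 < a i) (hlt2 : ∀ i, a i < (v i).1)
    (huR : ∀ i, u i ∈ Rect (d i).1 (d i).2) (hvR : ∀ i, v i ∈ Rect (d i).1 (d i).2)
    (hsep : ∀ i j, i < j → (a i, (u i).2) ∉ Rect (d j).1 (d j).2) :
    m ≤ (Q.filter (fun z => ∃ i, z ∈ Rect (d i).1 (d i).2)).card := by
  classical
  set T := Q.filter (fun z => ∃ i, z ∈ Rect (d i).1 (d i).2) with hT
  -- per-height counting
  have key : ∀ y : ℝ, ((univ : Finset (Fin m)).filter (fun i => (u i).2 = y)).card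
      ≤ (T.filter (fun z => z.2 = y)).card := by
    intro y
    set Iy := (univ : Finset (Fin m)).filter (fun i => (u i).2 = y) with hIy
    by_cases hne : Iy.Nonempty
    case neg => simp [Finset.not_nonempty_iff_eq_empty.mp hne]
    -- endpoint x-coordinates
    set V : Finset ℝ := Iy.biUnion (fun j => {(u j).1, (v j).1}) with hV
    have hVmemu : ∀ j ∈ Iy, (u j).1 ∈ V := by
      intro j hj; rw [hV]; exact mem_biUnion.mpr ⟨j, hj, by simp⟩
    have hVmemv : ∀ j ∈ Iy, (v j).1 ∈ V := by
      intro j hj; rw [hV]; exact mem_biUnion.mpr ⟨j, hj, by simp⟩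
    have hVpt : ∀ x ∈ V, ((x, y) : Pt) ∈ (↑P ∪ ↑Q : Set Pt) ∧
        ∃ j, ((x, y) : Pt) ∈ Rect (d j).1 (d j).2 := by
      intro x hx
      rw [hV] at hx
      obtain ⟨j, hj, hxj⟩ := mem_biUnion.mp hx
      have hjy : (u j).2 = y := (mem_filter.mp hj).2
      have hvy : (v j).2 = y := by rw [← huv j]; exact hjy
      simp only [mem_insert, mem_singleton] at hxj
      rcases hxj with h | h
      · have : ((x, y) : Pt) = u j := by rw [h, ← hjy]
        rw [this]; exact ⟨huS j, j, huR j⟩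
      · have : ((x, y) : Pt) = v j := by rw [h, ← hvy]
        rw [this]; exact ⟨hvS j, j, hvR j⟩
    obtain ⟨i0, hi0⟩ := hne
    have hVne : V.Nonempty := ⟨(u i0).1, hVmemu i0 hi0⟩
    set M := V.max' hVne with hM
    -- the injection
    set φ : Fin m → ℝ := fun i =>
      if h : (V.filter (fun t => t < a i)).Nonempty then (V.filter (fun t => t < a i)).max' h
      else 0 with hφ
    have hWne : ∀ i ∈ Iy, (V.filter (fun t => t < a i)).Nonempty := by
      intro i hi
      exact ⟨(u i).1, mem_filter.mpr ⟨hVmemu i hi, hlt i⟩⟩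
    have hφval : ∀ i ∈ Iy, φ i ∈ V ∧ φ i < a i := by
      intro i hi
      rw [hφ]; simp only [dif_pos (hWne i hi)]
      have := (V.filter (fun t => t < a i)).max'_mem (hWne i hi)
      exact ⟨(mem_filter.mp this).1, (mem_filter.mp this).2⟩
    have hφmax : ∀ i ∈ Iy, ∀ x ∈ V, x < a i → x ≤ φ i := by
      intro i hi x hx hxa
      have hxm : x ∈ V.filter (fun t => t < a i) := mem_filter.mpr ⟨hx, hxa⟩
      rw [hφ]; simp only [dif_pos (hWne i hi)]
      exact le_max' _ x hxm
    -- maps into V.erase M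
    have hmaps : ∀ i ∈ Iy, φ i ∈ V.erase M := by
      intro i hi
      refine mem_erase.mpr ⟨?_, (hφval i hi).1⟩
      intro hcon
      have h1 : (v i).1 ≤ M := le_max' V _ (hVmemv i hi)
      have h2 : φ i < a i := (hφval i hi).2
      have h3 := hlt2 i
      rw [hcon] at h2
      linarith
    -- injectivity
    have hinj : ∀ i ∈ Iy, ∀ j ∈ Iy, i < j → φ i ≠ φ j := by
      intro i hi j hj hij heq
      have hiy : (u i).2 = y := (mem_filter.mp hi).2
      have hjy : (u j).2 = y := (mem_filter.mp hj).2
      have hw1 : φ i < a i := (hφval i hi).2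
      have hw2 : φ j < a j := (hφval j hj).2
      have huj : (u j).1 ≤ φ j := hφmax j hj _ (hVmemu j hj) (hlt j)
      -- a i ≤ (v j).1
      have hvj : a i ≤ (v j).1 := by
        by_contra hcon
        push_neg at hcon
        have := hφmax i hi _ (hVmemv j hj) hcon
        rw [heq] at this
        have := hlt2 j
        linarith
      -- so (a i, y) ∈ Rect (d j)
      have hmem : ((a i, y) : Pt) ∈ Rect (d j).1 (d j).2 := by
        obtain ⟨r1, r2, r3, r4⟩ := huR j
        obtain ⟨s1, s2, s3, s4⟩ := hvR j
        refine ⟨le_trans r1 ?_, le_trans ?_ s2, ?_, ?_⟩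
        · rw [heq] at hw1; linarith
        · exact hvj
        · rw [← hjy]; exact r3
        · rw [← hjy]; exact r4
      have := hsep i j hij
      rw [hiy] at this
      exact this hmem
    have hcard1 : Iy.card ≤ (V.erase M).card := by
      apply Finset.card_le_card_of_injOn φ (fun i hi => hmaps i hi)
      intro i hi j hj heq
      by_contra hne'
      rcases lt_or_gt_of_ne hne' with h | h
      · exact hinj i (by simpa using hi) j (by simpa using hj) h heq
      · exact hinj j (by simpa using hj) i (by simpa using hi) h heq.symm
    have hcard2 : (V.erase M).card = V.card - 1 :=
      Finset.card_erase_of_mem (V.max'_mem hVne)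
    -- at most one P point at this height
    set Vbad := V.filter (fun x => ((x, y) : Pt) ∈ P) with hVbad
    have hbad : Vbad.card ≤ 1 := by
      by_contra hcon
      push_neg at hcon
      obtain ⟨x1, hx1, x2, hx2, hx12⟩ := Finset.one_lt_card.mp hcon
      have p1 := (mem_filter.mp hx1).2
      have p2 := (mem_filter.mp hx2).2
      exact hY _ p1 _ p2 (fun hh => hx12 (congrArg Prod.fst hh)) rfl
    set VQ := V.filter (fun x => ¬ ((x, y) : Pt) ∈ P) with hVQ
    have hsplitV : VQ.card + Vbad.card = V.card := by
      rw [hVQ, hVbad]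
      rw [add_comm]
      exact Finset.card_filter_add_card_filter_not _
    -- VQ injects into the fiber of T
    have hcard3 : VQ.card ≤ (T.filter (fun z => z.2 = y)).card := by
      apply Finset.card_le_card_of_injOn (fun x => ((x, y) : Pt))
      · intro x hx
        have hxV := (mem_filter.mp hx).1
        have hxP := (mem_filter.mp hx).2
        obtain ⟨hPQ, j, hrect⟩ := hVpt x hxV
        have hxQ : ((x, y) : Pt) ∈ Q := by
          rcases hPQ with h | h
          · exact absurd h hxP
          · exact h
        exact mem_filter.mpr ⟨mem_filter.mpr ⟨hxQ, j, hrect⟩, rfl⟩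
      · intro x1 _ x2 _ heq
        exact congrArg Prod.fst heq
    omega
  -- assemble over heights
  set Y : Finset ℝ := (univ : Finset (Fin m)).image (fun i => (u i).2) with hYdef
  have hm : ((univ : Finset (Fin m))).card
      = ∑ y ∈ Y, ((univ : Finset (Fin m)).filter (fun i => (u i).2 = y)).card :=
    Finset.card_eq_sum_card_fiberwise (fun i _ => mem_image_of_mem _ (mem_univ i))
  have hbiu : ∑ y ∈ Y, (T.filter (fun z => z.2 = y)).card
      = (Y.biUnion (fun y => T.filter (fun z => z.2 = y))).card := by
    rw [Finset.card_biUnion]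
    intro y1 _ y2 _ hne
    simp only [Finset.disjoint_left]
    intro z hz1 hz2
    exact hne ((mem_filter.mp hz1).2 ▸ ((mem_filter.mp hz2).2).symm ▸ rfl)
  calc m = ((univ : Finset (Fin m))).card := by simp
    _ = ∑ y ∈ Y, ((univ : Finset (Fin m)).filter (fun i => (u i).2 = y)).card := hm
    _ ≤ ∑ y ∈ Y, (T.filter (fun z => z.2 = y)).card := Finset.sum_le_sum (fun y _ => key y)
    _ = (Y.biUnion (fun y => T.filter (fun z => z.2 = y))).card := hbiu
    _ ≤ T.card := Finset.card_le_card (fun z hz => by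
        obtain ⟨y, _, hzy⟩ := mem_biUnion.mp hz
        exact (mem_filter.mp hzy).1)

open Finset in
lemma main_count (P : Finset Pt) (D : Finset Dem)
    (hinst : ∀ dd ∈ D, dd.1 ∈ P ∧ dd.2 ∈ P ∧ dd.1.1 < dd.2.1)
    (hY : ∀ p ∈ P, ∀ q ∈ P, p ≠ q → p.2 ≠ q.2)
    (hmono : ∀ dd ∈ D, dd.1.2 < dd.2.2)
    (e : Fin D.card → Dem) (av : Fin D.card → ℝ)
    (he : Function.Injective e) (heD : ∀ i, e i ∈ D)
    (ha : ∀ i, min (e i).1.1 (e i).2.1 < av i ∧ av i < max (e i).1.1 (e i).2.1)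
    (hsepv : ∀ i j, i < j → VSeg (av i) (e i).1.2 (e i).2.2 ∩ Rect (e j).1 (e j).2 = ∅)
    (Q : Finset Pt) (hfeas : ∀ dd ∈ D, MConnected (↑P ∪ ↑Q) dd.1 dd.2)
    (D' : Finset Dem) (hD' : D' ⊆ D) :
    D'.card ≤ (Q.filter (fun z => ∃ dd ∈ D', z ∈ Rect dd.1 dd.2)).card := by
  classical
  have himgD : Finset.image e univ = D := by
    apply Finset.eq_of_subset_of_card_le
    · intro x hx; obtain ⟨i, _, hi⟩ := mem_image.mp hx; exact hi ▸ heD i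
    · rw [Finset.card_image_of_injective _ he, card_univ, Fintype.card_fin]
  set I : Finset (Fin D.card) := univ.filter (fun i => e i ∈ D') with hI
  have himg : Finset.image e I = D' := by
    apply Finset.Subset.antisymm
    · intro x hx
      obtain ⟨i, hi, hix⟩ := mem_image.mp hx
      exact hix ▸ (mem_filter.mp hi).2
    · intro dd hdd
      have : dd ∈ Finset.image e univ := by rw [himgD]; exact hD' hdd
      obtain ⟨i, _, hi⟩ := mem_image.mp this
      exact mem_image.mpr ⟨i, mem_filter.mpr ⟨mem_univ i, hi ▸ hdd⟩, hi⟩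
  have hIcard : I.card = D'.card := by
    rw [← himg, Finset.card_image_of_injective _ he]
  set m := I.card with hm
  set σ := I.orderIsoOfFin rfl with hσ
  set B : Finset ℝ := (P ∪ Q).image Prod.fst with hB
  have havoidB : ∀ a' : ℝ, a' ∉ B → ∀ z ∈ (↑P ∪ ↑Q : Set Pt), z.1 ≠ a' := by
    intro a' ha' z hz hza
    apply ha'
    rw [hB]
    apply mem_image.mpr
    refine ⟨z, ?_, hza⟩
    rw [Finset.mem_union]
    rcases hz with h | h
    · exact Or.inl (by exact_mod_cast h)
    · exact Or.inr (by exact_mod_cast h)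
  have hdata : ∀ t : Fin m, ∃ (a' : ℝ) (uu vv : Pt),
      uu ∈ (↑P ∪ ↑Q : Set Pt) ∧ vv ∈ (↑P ∪ ↑Q : Set Pt) ∧ uu.2 = vv.2 ∧
      uu.1 < a' ∧ a' < vv.1 ∧
      uu ∈ Rect (e (σ t).1).1 (e (σ t).1).2 ∧ vv ∈ Rect (e (σ t).1).1 (e (σ t).1).2 ∧
      ∀ j : Fin D.card, (σ t).1 < j →
        VSeg a' (e (σ t).1).1.2 (e (σ t).1).2.2 ∩ Rect (e j).1 (e j).2 = ∅ := by
    intro t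
    set i := (σ t).1 with hi
    have hiI : i ∈ I := (σ t).2
    have hddD' : e i ∈ D' := (mem_filter.mp hiI).2
    have hddD : e i ∈ D := hD' hddD'
    have hx : (e i).1.1 < (e i).2.1 := (hinst _ hddD).2.2
    have hy : (e i).1.2 < (e i).2.2 := hmono _ hddD
    have hai := ha i
    rw [min_eq_left hx.le, max_eq_right hx.le] at hai
    obtain ⟨a', ha'B, ha'1, ha'2, ha'sep⟩ :=
      perturb_s2 hai.1 hai.2 e (univ.filter (fun j => i < j))
        (fun j hj => hsepv i j (mem_filter.mp hj).2) B
    obtain ⟨uu, vv, h1, h2, h3, h4, h5, h6, h7⟩ :=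
      exists_crossing (hfeas _ hddD) hx hy.le ha'1 ha'2 (havoidB a' ha'B)
    exact ⟨a', uu, vv, h1, h2, h3, h4, h5, h6, h7,
      fun j hj => ha'sep j (mem_filter.mpr ⟨mem_univ j, hj⟩)⟩
  choose af uf vf h1 h2 h3 h4 h5 h6 h7 h8 using hdata
  have hsepcore : ∀ t t' : Fin m, t < t' →
      ((af t, (uf t).2) : Pt) ∉ Rect (e (σ t').1).1 (e (σ t').1).2 := by
    intro t t' htt'
    have hlt : (σ t).1 < (σ t').1 := by
      have : σ t < σ t' := (OrderIso.lt_iff_lt σ).mpr htt'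
      exact this
    have hempty := h8 t _ hlt
    intro hmem
    have hvseg : ((af t, (uf t).2) : Pt)
        ∈ VSeg (af t) (e (σ t).1).1.2 (e (σ t).1).2.2 := by
      obtain ⟨_, _, r3, r4⟩ := h6 t
      exact ⟨rfl, r3, r4⟩
    have : ((af t, (uf t).2) : Pt) ∈ (∅ : Set Pt) := hempty ▸ Set.mem_inter hvseg hmem
    exact this
  have hcore := core_count P Q hY m (fun t => e (σ t).1) af uf vf
    h1 h2 h3 h4 h5 h6 h7 hsepcore
  calc D'.card = m := hIcard.symm
    _ ≤ (Q.filter (fun z => ∃ t : Fin m, z ∈ Rect (e (σ t).1).1 (e (σ t).1).2)).card := hcore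
    _ ≤ (Q.filter (fun z => ∃ dd ∈ D', z ∈ Rect dd.1 dd.2)).card := by
        apply Finset.card_le_card
        intro z hz
        obtain ⟨hzQ, t, hzt⟩ := mem_filter.mp hz
        exact mem_filter.mpr ⟨hzQ, e (σ t).1, (mem_filter.mp (σ t).2).2, hzt⟩

end AuxProofs

/-- For a monotone, vertically separable demand set `D` and a feasible solution
`Q` disjoint from `P` with `|Q| = |D|`, there is a bijection `c : Q → D` with `q ∈ R(c q)`;
in particular, every `Q' ⊆ Q` is covered by at least `|Q'|` distinct demands. -/
theorem stmt2 (P : Finset Pt) (D : Finset Dem)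
    (hinst : IsInstance P D) (hX : DistinctX P) (hY : DistinctY P)
    (hmono : ∀ d ∈ D, d.1.2 < d.2.2)
    (hvs : VertSeparable D)
    (Q : Finset Pt) (hfeas : MFeasible ↑P ↑D ↑Q)
    (hdisj : ∀ q ∈ Q, q ∉ P) (hcard : Q.card = D.card) :
    (∃ c : {q : Pt // q ∈ Q} → {d : Dem // d ∈ D}, Function.Bijective c ∧
      ∀ q : {q : Pt // q ∈ Q}, (q : Pt) ∈ Rect (c q : Dem).1 (c q : Dem).2) ∧
    ∀ Q' ⊆ Q, ∃ D' ⊆ D, Q'.card ≤ D'.card ∧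
      ∀ d ∈ D', ∃ q ∈ Q', q ∈ Rect d.1 d.2 := by
  classical
  obtain ⟨e, av, he, heD, ha, hsepv⟩ := hvs
  have hfeas' : ∀ dd ∈ D, MConnected (↑P ∪ ↑Q) dd.1 dd.2 := by
    intro dd hdd
    exact hfeas dd (by exact_mod_cast hdd)
  have hmono' : ∀ dd ∈ D, dd.1.2 < dd.2.2 := hmono
  have hmain : ∀ D' ⊆ D, D'.card ≤ (Q.filter (fun z => ∃ dd ∈ D', z ∈ Rect dd.1 dd.2)).card :=
    fun D' hD' => main_count P D hinst hY hmono' e av he heD ha hsepv Q hfeas' D' hD'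
  set t : {d : Dem // d ∈ D} → Finset Pt :=
    fun x => Q.filter (fun z => z ∈ Rect x.1.1 x.1.2) with ht
  have hall : ∀ s : Finset {d : Dem // d ∈ D}, s.card ≤ (s.biUnion t).card := by
    intro s
    set D' := s.image (fun x => x.1) with hD'
    have hcardD' : D'.card = s.card := Finset.card_image_of_injective _ Subtype.val_injective
    have hsub : D' ⊆ D := by
      intro x hx
      obtain ⟨y, _, hy⟩ := Finset.mem_image.mp hx
      exact hy ▸ y.2
    have h := hmain D' hsub
    rw [hcardD'] at h
    refine le_trans h (Finset.card_le_card ?_)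
    intro z hz
    obtain ⟨hzQ, dd, hdd, hrect⟩ := Finset.mem_filter.mp hz
    obtain ⟨y, hy, hyd⟩ := Finset.mem_image.mp hdd
    exact Finset.mem_biUnion.mpr ⟨y, hy, Finset.mem_filter.mpr ⟨hzQ, by rw [hyd]; exact hrect⟩⟩
  obtain ⟨f, hfinj, hf⟩ := (Finset.all_card_le_biUnion_card_iff_exists_injective t).mp hall
  have hfQ : ∀ x, f x ∈ Q := fun x => (Finset.mem_filter.mp (hf x)).1
  have hfR : ∀ x, f x ∈ Rect x.1.1 x.1.2 := fun x => (Finset.mem_filter.mp (hf x)).2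
  set F : {d : Dem // d ∈ D} → {q : Pt // q ∈ Q} := fun x => ⟨f x, hfQ x⟩ with hF
  have hFinj : Function.Injective F := fun x y hxy => hfinj (congrArg Subtype.val hxy)
  have hcards : Fintype.card {d : Dem // d ∈ D} = Fintype.card {q : Pt // q ∈ Q} := by
    rw [Fintype.card_coe, Fintype.card_coe, hcard]
  have hFbij : Function.Bijective F :=
    (Fintype.bijective_iff_injective_and_card F).mpr ⟨hFinj, hcards⟩
  set E := Equiv.ofBijective F hFbij with hE
  have hprop : ∀ q : {q : Pt // q ∈ Q},
      (q : Pt) ∈ Rect ((E.symm q : {d : Dem // d ∈ D}) : Dem).1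
        ((E.symm q : {d : Dem // d ∈ D}) : Dem).2 := by
    intro q
    have h1 : F (E.symm q) = q := E.apply_symm_apply q
    have h2 : (q : Pt) = f (E.symm q) := (congrArg Subtype.val h1).symm
    rw [h2]
    exact hfR _
  constructor
  · exact ⟨E.symm, E.symm.bijective, hprop⟩
  · intro Q' hQ'
    refine ⟨D.filter (fun dd => ∃ qq ∈ Q', qq ∈ Rect dd.1 dd.2),
      Finset.filter_subset _ _, ?_, fun dd hdd => (Finset.mem_filter.mp hdd).2⟩
    set g : Pt → Dem := fun z =>
      if h : z ∈ Q then ((E.symm ⟨z, h⟩ : {d : Dem // d ∈ D}) : Dem)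
      else ((0,0),(0,0)) with hg
    apply Finset.card_le_card_of_injOn g
    · intro z hz
      have hzQ : z ∈ Q := hQ' hz
      simp only [hg, dif_pos hzQ]
      exact Finset.mem_filter.mpr ⟨(E.symm ⟨z, hzQ⟩).2, z, hz, hprop ⟨z, hzQ⟩⟩
    · intro z1 hz1 z2 hz2 heq
      have h1 : z1 ∈ Q := hQ' hz1
      have h2 : z2 ∈ Q := hQ' hz2
      simp only [hg, dif_pos h1, dif_pos h2] at heq
      have h3 : (E.symm ⟨z1, h1⟩ : {d : Dem // d ∈ D}) = E.symm ⟨z2, h2⟩ :=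
        Subtype.coe_injective heq
      have h4 := E.symm.injective h3
      exact congrArg Subtype.val h4
end

section
/- For every integer n ≥ 1, let P = {(i,i) : 1 ≤ i ≤ n} ∪ {(i+n, i+n) : 1 ≤ i ≤ n} and D = {((i,i),(i+n,i+n)) : 1 ≤ i ≤ n} (so the demand rectangles are the n diagonally shifted squares R_i = R((i,i),(i+n,i+n))). Then IR(P,D) = 1 and VS(P,D) = n. In particular, the ratio VS/IR can be as large as the number of demands. -/
noncomputable def dem3 (n i : ℕ) : Dem :=
  ((((i : ℝ), (i : ℝ)) : Pt), (((i : ℝ) + n, (i : ℝ) + n) : Pt))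

lemma dem3_inj (n : ℕ) : Function.Injective (dem3 n) := by
  intro i j h
  have : (i : ℝ) = j := congrArg (fun d => d.1.1) h
  exact_mod_cast this

lemma irn_aux (n : ℕ) (hn : 1 ≤ n) :
    IRN ↑((Finset.Icc 1 n).image (dem3 n)) = 1 := by
  set D := (Finset.Icc 1 n).image (dem3 n) with hD
  have hn' : (1 : ℝ) ≤ n := by exact_mod_cast hn
  have h1 : ∃ D' : Finset Dem, ↑D' ⊆ (↑D : Set Dem) ∧ D'.card = 1 ∧
      ∀ d ∈ D', ∀ e ∈ D', d ≠ e → NonConflicting d e := by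
    refine ⟨{dem3 n 1}, ?_, by simp, ?_⟩
    · intro d hd
      simp only [Finset.coe_singleton, Set.mem_singleton_iff] at hd
      subst hd
      exact Finset.mem_coe.mpr (Finset.mem_image_of_mem _ (Finset.mem_Icc.mpr ⟨le_refl 1, hn⟩))
    · intro d hd e he hne
      simp only [Finset.mem_singleton] at hd he
      exact absurd (hd.trans he.symm) hne
  have key : ∀ a b : ℕ, 1 ≤ a → a ≤ n → 1 ≤ b → b ≤ n → a < b →
      ¬ NonConflicting (dem3 n a) (dem3 n b) := by
    intro a b ha1 han hb1 hbn hab hNC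
    have hab' : (a : ℝ) < b := by exact_mod_cast hab
    have hbn' : (b : ℝ) ≤ n := by exact_mod_cast hbn
    have ha1' : (1 : ℝ) ≤ a := by exact_mod_cast ha1
    have hco : (((b : ℝ), (b : ℝ)) : Pt) ∈ Corners (dem3 n b).1 (dem3 n b).2 := by
      simp [Corners, dem3]
    refine hNC.1 _ hco ?_
    have hmn : min ((a : ℝ)) ((a : ℝ) + n) < (b : ℝ) :=
      lt_of_le_of_lt (min_le_left _ _) hab'
    have hmx : (b : ℝ) < max ((a : ℝ)) ((a : ℝ) + n) :=
      lt_of_lt_of_le (by linarith) (le_max_right _ _)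
    exact ⟨hmn, hmx, hmn, hmx⟩
  have hub : ∀ m ∈ {m | ∃ D' : Finset Dem, ↑D' ⊆ (↑D : Set Dem) ∧ D'.card = m ∧
      ∀ d ∈ D', ∀ e ∈ D', d ≠ e → NonConflicting d e}, m ≤ 1 := by
    rintro m ⟨D', hsub, hcard, hnc⟩
    by_contra hm
    have h2 : 1 < D'.card := by omega
    obtain ⟨d, hd, e, he, hde⟩ := Finset.one_lt_card.mp h2
    have hdD : d ∈ D := Finset.mem_coe.mp (hsub hd)
    have heD : e ∈ D := Finset.mem_coe.mp (hsub he)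
    obtain ⟨i, hi, rfl⟩ := Finset.mem_image.mp hdD
    obtain ⟨j, hj, rfl⟩ := Finset.mem_image.mp heD
    have hij : i ≠ j := fun h => hde (by rw [h])
    simp only [Finset.mem_Icc] at hi hj
    rcases hij.lt_or_gt with h | h
    · exact key i j hi.1 hi.2 hj.1 hj.2 h (hnc _ hd _ he hde)
    · exact key j i hj.1 hj.2 hi.1 hi.2 h (hnc _ he _ hd hde.symm)
  exact le_antisymm (csSup_le ⟨1, h1⟩ hub) (le_csSup ⟨1, hub⟩ h1)

lemma vsn_aux (n : ℕ) (hn : 1 ≤ n) :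
    VSN ↑((Finset.Icc 1 n).image (dem3 n)) = n := by
  set D := (Finset.Icc 1 n).image (dem3 n) with hD
  have hn' : (1 : ℝ) ≤ n := by exact_mod_cast hn
  have hDcard : D.card = n := by
    rw [hD, Finset.card_image_of_injective _ (dem3_inj n), Nat.card_Icc]; omega
  have hnS : ∃ D' : Finset Dem, ↑D' ⊆ (↑D : Set Dem) ∧ D'.card = n ∧ VertSeparable D' := by
    refine ⟨D, subset_rfl, hDcard, ?_⟩
    refine ⟨fun k => dem3 n (n - k.val), fun k => ((n - k.val : ℕ) : ℝ) + n - 1/2,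
      ?_, ?_, ?_, ?_⟩
    · intro k k' h
      have h1 : n - k.val = n - k'.val := dem3_inj n h
      have h2 : k.val < n := hDcard ▸ k.isLt
      have h3 : k'.val < n := hDcard ▸ k'.isLt
      exact Fin.ext (by omega)
    · intro k
      have h2 : k.val < n := hDcard ▸ k.isLt
      exact Finset.mem_image_of_mem _ (Finset.mem_Icc.mpr ⟨by omega, by omega⟩)
    · intro k
      simp only [dem3]
      have h1 : min (((n - k.val : ℕ) : ℝ)) (((n - k.val : ℕ) : ℝ) + n) = ((n - k.val : ℕ) : ℝ) :=
        min_eq_left (by linarith)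
      have h2 : max (((n - k.val : ℕ) : ℝ)) (((n - k.val : ℕ) : ℝ) + n)
          = ((n - k.val : ℕ) : ℝ) + n := max_eq_right (by linarith)
      rw [h1, h2]
      constructor <;> linarith
    · intro i j hij
      rw [Set.eq_empty_iff_forall_notMem]
      rintro z ⟨hz1, hz2⟩
      simp only [VSeg, dem3, Set.mem_setOf_eq] at hz1
      simp only [Rect, dem3, Set.mem_setOf_eq] at hz2
      have hjn : j.val < n := hDcard ▸ j.isLt
      have hmm : (n - j.val : ℕ) + 1 ≤ n - i.val := by
        have hij2 : i.val < j.val := hij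
        omega
      have hmm' : ((n - j.val : ℕ) : ℝ) + 1 ≤ ((n - i.val : ℕ) : ℝ) := by exact_mod_cast hmm
      have hmax : max (((n - j.val : ℕ) : ℝ)) (((n - j.val : ℕ) : ℝ) + n)
          = ((n - j.val : ℕ) : ℝ) + n := max_eq_right (by linarith)
      rw [hmax] at hz2
      linarith [hz1.1 ▸ hz2.2.1, hz2.2.1, hz1.1.symm ▸ hz2.2.1]
  have hub : ∀ m ∈ {m | ∃ D' : Finset Dem, ↑D' ⊆ (↑D : Set Dem) ∧ D'.card = m ∧
      VertSeparable D'}, m ≤ n := by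
    rintro m ⟨D', hsub, hcard, -⟩
    calc m = D'.card := hcard.symm
    _ ≤ D.card := Finset.card_le_card (Finset.coe_subset.mp hsub)
    _ = n := hDcard
  exact le_antisymm (csSup_le ⟨n, hnS⟩ hub) (le_csSup ⟨n, hub⟩ hnS)

/-- For the instance with points `(i,i)` and `(i+n, i+n)` and the `n` diagonally
shifted demands `((i,i), (i+n,i+n))`, `1 ≤ i ≤ n`, we have `IR = 1` and `VS = n`. -/
theorem stmt3 (n : ℕ) (hn : 1 ≤ n) :
    IRN ↑((Finset.Icc 1 n).image fun i : ℕ =>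
        ((((i : ℝ), (i : ℝ)) : Pt), (((i : ℝ) + n, (i : ℝ) + n) : Pt))) = 1 ∧
    VSN ↑((Finset.Icc 1 n).image fun i : ℕ =>
        ((((i : ℝ), (i : ℝ)) : Pt), (((i : ℝ) + n, (i : ℝ) + n) : Pt))) = n :=
  ⟨irn_aux n hn, vsn_aux n hn⟩
end

section
/- Let (P,D) be a MinGMConn instance and let I = {[min(y(p),y(q)), max(y(p),y(q))] : (p,q) ∈ D} be the set of y-intervals of the demands. Then there exists a hitting set for I (a finite set R ⊆ ℝ such that every interval of I contains a point of R) of cardinality at most IS(P,D); in particular, the minimum cardinality of a hitting set for I is at most IS(P,D). -/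
/-- Greedy interval stabbing: a hitting set together with an equally large family of
pairwise disjoint y-intervals. -/
lemma greedy_hit (D : Finset Dem) : ∃ (R : Finset ℝ) (D' : Finset Dem),
    D' ⊆ D ∧
    (∀ d ∈ D, ∃ r ∈ R, min d.1.2 d.2.2 ≤ r ∧ r ≤ max d.1.2 d.2.2) ∧
    (∀ d ∈ D', ∀ e ∈ D', d ≠ e →
      max d.1.2 d.2.2 < min e.1.2 e.2.2 ∨ max e.1.2 e.2.2 < min d.1.2 d.2.2) ∧
    R.card ≤ D'.card := by
  induction D using Finset.strongInduction with
  | _ D ih =>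
    rcases D.eq_empty_or_nonempty with rfl | hne
    · exact ⟨∅, ∅, by simp, by simp, by simp, by simp⟩
    · obtain ⟨d, hd, hmin⟩ := D.exists_min_image (fun e => max e.1.2 e.2.2) hne
      set m := max d.1.2 d.2.2 with hm
      set D₂ := D.filter (fun e => m < min e.1.2 e.2.2) with hD₂
      have hdnot : d ∉ D₂ := by
        simp only [hD₂, Finset.mem_filter, not_and]
        intro _
        exact not_lt.2 (le_trans min_le_max (le_of_eq hm.symm))
      have hss : D₂ ⊂ D := ⟨Finset.filter_subset _ _, fun h => hdnot (h hd)⟩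
      obtain ⟨R', D'', hsub, hhit, hsep, hcard⟩ := ih D₂ hss
      have hdD'' : d ∉ D'' := fun h => hdnot (hsub h)
      refine ⟨insert m R', insert d D'', ?_, ?_, ?_, ?_⟩
      · exact Finset.insert_subset hd (hsub.trans (Finset.filter_subset _ _))
      · intro e he
        by_cases hcase : m < min e.1.2 e.2.2
        · obtain ⟨r, hr, h1, h2⟩ := hhit e (Finset.mem_filter.2 ⟨he, hcase⟩)
          exact ⟨r, Finset.mem_insert_of_mem hr, h1, h2⟩
        · exact ⟨m, Finset.mem_insert_self _ _, not_lt.1 hcase, hmin e he⟩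
      · intro a ha b hb hab
        rcases Finset.mem_insert.1 ha with rfl | ha'
        · rcases Finset.mem_insert.1 hb with rfl | hb'
          · exact absurd rfl hab
          · exact Or.inl (Finset.mem_filter.1 (hsub hb')).2
        · rcases Finset.mem_insert.1 hb with rfl | hb'
          · exact Or.inr (Finset.mem_filter.1 (hsub ha')).2
          · exact hsep a ha' b hb' hab
      · calc (insert m R').card ≤ R'.card + 1 := Finset.card_insert_le _ _
          _ ≤ D''.card + 1 := by omega
          _ = (insert d D'').card := (Finset.card_insert_of_notMem hdD'').symm

/-- The y-intervals of the demands admit a hitting set of cardinality at most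
`IS(P,D)`. -/
theorem stmt5 (P : Finset Pt) (D : Finset Dem) (hinst : IsInstance P D) :
    ∃ R : Finset ℝ,
      (∀ d ∈ D, ∃ r ∈ R, min d.1.2 d.2.2 ≤ r ∧ r ≤ max d.1.2 d.2.2) ∧
      R.card ≤ ISN ↑D := by
  obtain ⟨R, D', hsub, hhit, hsep, hcard⟩ := greedy_hit D
  refine ⟨R, hhit, hcard.trans ?_⟩
  have hbis : LeftBIS D' := by
    intro a ha b hb hab
    have hemp : LSeg a ∩ LSeg b = ∅ := by
      ext z
      simp only [LSeg, VSeg, Set.mem_inter_iff, Set.mem_setOf_eq, Set.mem_empty_iff_false,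
        iff_false]
      rintro ⟨⟨_, h1, h2⟩, ⟨_, h3, h4⟩⟩
      rcases hsep a ha b hb hab with h | h
      · linarith
      · linarith
    rw [hemp]
    exact Set.subsingleton_empty
  have hmem : D'.card ∈ {n | ∃ D'' : Finset Dem, ↑D'' ⊆ (↑D : Set Dem) ∧ D''.card = n ∧
      (LeftBIS D'' ∨ RightBIS D'')} :=
    ⟨D', Finset.coe_subset.2 hsub, rfl, Or.inl hbis⟩
  have hbdd : BddAbove {n | ∃ D'' : Finset Dem, ↑D'' ⊆ (↑D : Set Dem) ∧ D''.card = n ∧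
      (LeftBIS D'' ∨ RightBIS D'')} := by
    refine ⟨D.card, ?_⟩
    rintro n ⟨D'', hs, rfl, -⟩
    exact Finset.card_le_card (Finset.coe_subset.1 hs)
  exact le_csSup hbdd hmem
end
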